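/- arXiv:1809.03814 — 5 statements merged into one kernel-verified Lean document; each statement's English description precedes it below -/
import Mathlib

section
/- Applying a single decoding rule to an encoded string graph yields an encoded string graph with strictly fewer encoding edges. -/
/-- Vertex labels: node-vertex labels, wire-vertex labels, and nonterminal labels. -/
inductive VLab : Type
  | node : ℕ → VLab
  | wire : ℕ → VLab
  | nt : ℕ → VLab
  deriving DecidableEq

/-- Edge labels: plain (terminal) labels and encoding labels. -/
inductive ELab : Type
  | plain : ℕ → ELab
  | enc : ℕ → ELab
  deriving DecidableEq

def VLab.isNode : VLab → Bool | .node _ => true | _ => false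
def VLab.isWire : VLab → Bool | .wire _ => true | _ => false
def VLab.isNT : VLab → Bool | .nt _ => true | _ => false
def ELab.isEnc : ELab → Bool | .enc _ => true | _ => false

/-- A finite labelled directed graph with vertices drawn from ℕ. -/
structure LGraph : Type where
  V : Finset ℕ
  E : Finset (ℕ × ELab × ℕ)
  lab : ℕ → VLab

def inDeg (H : LGraph) (v : ℕ) : ℕ := (H.E.filter (fun e => e.2.2 = v)).card
def outDeg (H : LGraph) (v : ℕ) : ℕ := (H.E.filter (fun e => e.1 = v)).card

/-- Edges connect distinct vertices of the graph (no self-loops). -/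
def WellFormed (H : LGraph) : Prop := ∀ e ∈ H.E, e.1 ∈ H.V ∧ e.2.2 ∈ H.V ∧ e.1 ≠ e.2.2

/-- A string graph: wire-vertices have in/out-degree at most one, no encoding
edges, and node-vertices are adjacent only to wire-vertices. -/
def StringGraph (H : LGraph) : Prop :=
  WellFormed H ∧
  (∀ v ∈ H.V, (H.lab v).isNode = true ∨ (H.lab v).isWire = true) ∧
  (∀ v ∈ H.V, (H.lab v).isWire = true → inDeg H v ≤ 1 ∧ outDeg H v ≤ 1) ∧
  (∀ e ∈ H.E, e.2.1.isEnc = false) ∧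
  (∀ e ∈ H.E, ¬((H.lab e.1).isNode = true ∧ (H.lab e.2.2).isNode = true))

/-- An encoded string graph: like a string graph but encoding-labelled edges
between node-vertices are allowed. -/
def EncodedSG (H : LGraph) : Prop :=
  WellFormed H ∧
  (∀ v ∈ H.V, (H.lab v).isNode = true ∨ (H.lab v).isWire = true) ∧
  (∀ v ∈ H.V, (H.lab v).isWire = true → inDeg H v ≤ 1 ∧ outDeg H v ≤ 1) ∧
  (∀ e ∈ H.E, if e.2.1.isEnc = true
    then (H.lab e.1).isNode = true ∧ (H.lab e.2.2).isNode = true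
    else ¬((H.lab e.1).isNode = true ∧ (H.lab e.2.2).isNode = true))

/-- Number of encoding edges. -/
def encCount (H : LGraph) : ℕ := (H.E.filter (fun e => e.2.1.isEnc = true)).card

def isInput (H : LGraph) (v : ℕ) : Prop := (H.lab v).isWire = true ∧ inDeg H v = 0
def isOutput (H : LGraph) (v : ℕ) : Prop := (H.lab v).isWire = true ∧ outDeg H v = 0

/-- A decoding rule: a replacement fragment with two distinguished node-vertices. -/
structure DecRule : Type where
  F : LGraph
  src : ℕ
  tgt : ℕ

/-- A decoding system: one rule for every triple (encoding label, node label, node label). -/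
structure DecSystem : Type where
  rule : ℕ → ℕ → ℕ → DecRule

/-- The rule for (α,σ₁,σ₂) has as RHS a string graph on the two node-vertices with at
least one additional vertex and no inputs, outputs or encoding edges. -/
def ValidDecRule (R : DecRule) (s1 s2 : ℕ) : Prop :=
  R.src ∈ R.F.V ∧ R.tgt ∈ R.F.V ∧ R.src ≠ R.tgt ∧
  R.F.lab R.src = VLab.node s1 ∧ R.F.lab R.tgt = VLab.node s2 ∧
  StringGraph R.F ∧ 3 ≤ R.F.V.card ∧
  (∀ v ∈ R.F.V, (R.F.lab v).isNode = true → v = R.src ∨ v = R.tgt) ∧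
  (∀ v ∈ R.F.V, (R.F.lab v).isWire = true → inDeg R.F v = 1 ∧ outDeg R.F v = 1)

def ValidDecSystem (T : DecSystem) : Prop := ∀ a s1 s2, ValidDecRule (T.rule a s1 s2) s1 s2

/-- One DPO decoding step: remove one encoding edge and glue in a fresh copy of the
corresponding rule's right-hand side on its two endpoints. -/
def DecStep (T : DecSystem) (H H' : LGraph) : Prop :=
  ∃ u a w s1 s2, (u, ELab.enc a, w) ∈ H.E ∧
    H.lab u = VLab.node s1 ∧ H.lab w = VLab.node s2 ∧
    ∃ ρ : ℕ → ℕ,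
      Set.InjOn ρ ↑(T.rule a s1 s2).F.V ∧
      ρ (T.rule a s1 s2).src = u ∧ ρ (T.rule a s1 s2).tgt = w ∧
      (∀ x ∈ (T.rule a s1 s2).F.V, x ≠ (T.rule a s1 s2).src → x ≠ (T.rule a s1 s2).tgt →
        ρ x ∉ H.V) ∧
      H'.V = H.V ∪ (T.rule a s1 s2).F.V.image ρ ∧
      H'.E = (H.E.erase (u, ELab.enc a, w)) ∪
        (T.rule a s1 s2).F.E.image (fun e => (ρ e.1, e.2.1, ρ e.2.2)) ∧
      (∀ v ∈ H.V, H'.lab v = H.lab v) ∧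
      (∀ x ∈ (T.rule a s1 s2).F.V, H'.lab (ρ x) = (T.rule a s1 s2).F.lab x)

/-- Full decoding: exhaustive application of the decoding system. -/
def FullDecode (T : DecSystem) (H H' : LGraph) : Prop :=
  Relation.ReflTransGen (DecStep T) H H' ∧ encCount H' = 0

/-- LGraph isomorphism. -/
def GIso (H K : LGraph) : Prop :=
  ∃ f : ℕ → ℕ, Set.BijOn f ↑H.V ↑K.V ∧
    (∀ v ∈ H.V, K.lab (f v) = H.lab v) ∧
    (∀ u l w, u ∈ H.V → w ∈ H.V → ((u, l, w) ∈ H.E ↔ (f u, l, f w) ∈ K.E))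

/-- A single decoding step on an encoded string graph yields an
encoded string graph with strictly fewer encoding edges. -/
theorem decoding_step_decreases_encoding_edges (T : DecSystem) (hT : ValidDecSystem T)
    (H H' : LGraph) (hH : EncodedSG H) (hstep : DecStep T H H') :
    EncodedSG H' ∧ encCount H' < encCount H := by
  obtain ⟨u, a, w, s1, s2, heuw, hu, hw, ρ, hinj, hsrc, htgt, hfresh, hV, hE, hlabH, hlabF⟩ :=
    hstep
  obtain ⟨hsrcV, htgtV, hst, hlabsrc, hlabtgt, hSG, hcard, hnodes, hwires⟩ := hT a s1 s2
  obtain ⟨hFwf, hFlab, hFdeg, hFnoenc, hFnn⟩ := hSG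
  obtain ⟨hHwf, hHlab, hHdeg, hHenc⟩ := hH
  set R := T.rule a s1 s2 with hR
  have huV : u ∈ H.V := (hHwf _ heuw).1
  have hwV : w ∈ H.V := (hHwf _ heuw).2.1
  -- key fact: if ρ x lands in H.V then x is src or tgt
  have hback : ∀ x ∈ R.F.V, ρ x ∈ H.V → x = R.src ∨ x = R.tgt := by
    intro x hx hρx
    by_contra hcon
    push_neg at hcon
    exact hfresh x hx hcon.1 hcon.2 hρx
  -- labels of u, w in H'
  have hlabu : H'.lab u = H.lab u := hlabH u huV
  have hlabw : H'.lab w = H.lab w := hlabH w hwV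
  -- any vertex of H' is either in H.V or of the form ρ x with ρ x ∉ H.V
  have hcases : ∀ v ∈ H'.V, v ∈ H.V ∨
      ∃ x ∈ R.F.V, v = ρ x ∧ ρ x ∉ H.V := by
    intro v hv
    rw [hV] at hv
    rcases Finset.mem_union.1 hv with h | h
    · exact Or.inl h
    · obtain ⟨x, hx, hxe⟩ := Finset.mem_image.1 h
      by_cases hρx : ρ x ∈ H.V
      · exact Or.inl (hxe ▸ hρx)
      · exact Or.inr ⟨x, hx, hxe.symm, hρx⟩
  -- edges of H' fall into two cases
  have hEcases : ∀ e ∈ H'.E, (e ∈ H.E ∧ e ≠ (u, ELab.enc a, w)) ∨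
      ∃ f ∈ R.F.E, e = (ρ f.1, f.2.1, ρ f.2.2) := by
    intro e he
    rw [hE] at he
    rcases Finset.mem_union.1 he with h | h
    · exact Or.inl ⟨Finset.mem_of_mem_erase h, Finset.ne_of_mem_erase h⟩
    · obtain ⟨f, hf, hfe⟩ := Finset.mem_image.1 h
      exact Or.inr ⟨f, hf, hfe.symm⟩
  -- wire vertices of H are untouched by new edges (targets)
  have hHsub : ∀ v ∈ H.V, (H.lab v).isWire = true →
      (H'.E.filter (fun e => e.2.2 = v) ⊆ H.E.filter (fun e => e.2.2 = v)) ∧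
      (H'.E.filter (fun e => e.1 = v) ⊆ H.E.filter (fun e => e.1 = v)) := by
    intro v hv hwire
    have hvnode : (H.lab v).isNode = false := by
      cases hlv : H.lab v <;> simp [VLab.isWire, VLab.isNode, hlv] at hwire ⊢
    constructor
    · intro e he
      rw [Finset.mem_filter] at he ⊢
      rcases hEcases e he.1 with ⟨hmem, _⟩ | ⟨f, hf, hfe⟩
      · exact ⟨hmem, he.2⟩
      · exfalso
        have hf2 : f.2.2 ∈ R.F.V := (hFwf f hf).2.1
        have hev : ρ f.2.2 = v := by rw [← he.2, hfe]
        have : ρ f.2.2 ∈ H.V := by rw [hev]; exact hv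
        rcases hback _ hf2 this with h | h
        · have : v = u := by rw [← he.2, hfe, h, hsrc]
          rw [this, hu] at hvnode; simp [VLab.isNode] at hvnode
        · have : v = w := by rw [← he.2, hfe, h, htgt]
          rw [this, hw] at hvnode; simp [VLab.isNode] at hvnode
    · intro e he
      rw [Finset.mem_filter] at he ⊢
      rcases hEcases e he.1 with ⟨hmem, _⟩ | ⟨f, hf, hfe⟩
      · exact ⟨hmem, he.2⟩
      · exfalso
        have hf1 : f.1 ∈ R.F.V := (hFwf f hf).1
        have hev : ρ f.1 = v := by rw [← he.2, hfe]
        have : ρ f.1 ∈ H.V := by rw [hev]; exact hv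
        rcases hback _ hf1 this with h | h
        · have : v = u := by rw [← he.2, hfe, h, hsrc]
          rw [this, hu] at hvnode; simp [VLab.isNode] at hvnode
        · have : v = w := by rw [← he.2, hfe, h, htgt]
          rw [this, hw] at hvnode; simp [VLab.isNode] at hvnode
  refine ⟨⟨?_, ?_, ?_, ?_⟩, ?_⟩
  · -- WellFormed H'
    intro e he
    rcases hEcases e he with ⟨hmem, _⟩ | ⟨f, hf, hfe⟩
    · obtain ⟨h1, h2, h3⟩ := hHwf e hmem
      rw [hV]
      exact ⟨Finset.mem_union_left _ h1, Finset.mem_union_left _ h2, h3⟩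
    · obtain ⟨h1, h2, h3⟩ := hFwf f hf
      rw [hV, hfe]
      refine ⟨Finset.mem_union_right _ (Finset.mem_image_of_mem ρ h1),
        Finset.mem_union_right _ (Finset.mem_image_of_mem ρ h2), ?_⟩
      intro hcon
      exact h3 (hinj h1 h2 hcon)
  · -- label dichotomy
    intro v hv
    rcases hcases v hv with h | ⟨x, hx, hxe, _⟩
    · rw [hlabH v h]; exact hHlab v h
    · rw [hxe, hlabF x hx]; exact hFlab x hx
  · -- wire degree bounds
    intro v hv hwire
    rcases hcases v hv with h | ⟨x, hx, hxe, hρx⟩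
    · rw [hlabH v h] at hwire
      obtain ⟨hsub1, hsub2⟩ := hHsub v h hwire
      obtain ⟨hd1, hd2⟩ := hHdeg v h hwire
      exact ⟨le_trans (Finset.card_le_card hsub1) hd1,
             le_trans (Finset.card_le_card hsub2) hd2⟩
    · -- new vertex
      subst hxe
      have hxwire : (R.F.lab x).isWire = true := by rwa [hlabF x hx] at hwire
      have hsub1 : H'.E.filter (fun e => e.2.2 = ρ x) ⊆
          (R.F.E.filter (fun e => e.2.2 = x)).image (fun f => (ρ f.1, f.2.1, ρ f.2.2)) := by
        intro e he
        rw [Finset.mem_filter] at he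
        rcases hEcases e he.1 with ⟨hmem, _⟩ | ⟨f, hf, hfe⟩
        · exact absurd (he.2 ▸ (hHwf e hmem).2.1) hρx
        · refine Finset.mem_image.2 ⟨f, Finset.mem_filter.2 ⟨hf, ?_⟩, hfe.symm⟩
          have : ρ f.2.2 = ρ x := by rw [← he.2, hfe]
          exact hinj ((hFwf f hf).2.1) hx this
      have hsub2 : H'.E.filter (fun e => e.1 = ρ x) ⊆
          (R.F.E.filter (fun e => e.1 = x)).image (fun f => (ρ f.1, f.2.1, ρ f.2.2)) := by
        intro e he
        rw [Finset.mem_filter] at he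
        rcases hEcases e he.1 with ⟨hmem, _⟩ | ⟨f, hf, hfe⟩
        · exact absurd (he.2 ▸ (hHwf e hmem).1) hρx
        · refine Finset.mem_image.2 ⟨f, Finset.mem_filter.2 ⟨hf, ?_⟩, hfe.symm⟩
          have : ρ f.1 = ρ x := by rw [← he.2, hfe]
          exact hinj ((hFwf f hf).1) hx this
      obtain ⟨hd1, hd2⟩ := hFdeg x hx hxwire
      constructor
      · calc (H'.E.filter (fun e => e.2.2 = ρ x)).card
            ≤ _ := Finset.card_le_card hsub1
          _ ≤ (R.F.E.filter (fun e => e.2.2 = x)).card := Finset.card_image_le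
          _ ≤ 1 := hd1
      · calc (H'.E.filter (fun e => e.1 = ρ x)).card
            ≤ _ := Finset.card_le_card hsub2
          _ ≤ (R.F.E.filter (fun e => e.1 = x)).card := Finset.card_image_le
          _ ≤ 1 := hd2
  · -- encoding edge condition
    intro e he
    rcases hEcases e he with ⟨hmem, _⟩ | ⟨f, hf, hfe⟩
    · have h1 : H'.lab e.1 = H.lab e.1 := hlabH _ (hHwf e hmem).1
      have h2 : H'.lab e.2.2 = H.lab e.2.2 := hlabH _ (hHwf e hmem).2.1
      rw [h1, h2]
      exact hHenc e hmem
    · have hnoenc : f.2.1.isEnc = false := hFnoenc f hf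
      have h1 : H'.lab (ρ f.1) = R.F.lab f.1 := hlabF _ (hFwf f hf).1
      have h2 : H'.lab (ρ f.2.2) = R.F.lab f.2.2 := hlabF _ (hFwf f hf).2.1
      rw [hfe]
      simp only [hnoenc, h1, h2]
      simp only [Bool.false_eq_true, if_false]
      exact hFnn f hf
  · -- encCount decreases
    have himg : ((R.F.E.image (fun f => (ρ f.1, f.2.1, ρ f.2.2))).filter
        (fun e => e.2.1.isEnc = true)) = ∅ := by
      rw [Finset.filter_eq_empty_iff]
      intro e he
      obtain ⟨f, hf, hfe⟩ := Finset.mem_image.1 he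
      rw [← hfe]
      simp [hFnoenc f hf]
    unfold encCount
    rw [hE, Finset.filter_union, himg, Finset.union_empty, Finset.filter_erase]
    apply Finset.card_erase_lt_of_mem
    rw [Finset.mem_filter]
    exact ⟨heuw, rfl⟩
end

section
/- The language of the star grammar from the paper equals the family {sS_n : n ∈ ℕ, n ≥ 1} of star string graphs: the grammar with productions S → (central node-vertex c with one attached wire-vertex, plus nonterminal X connected to c) and X → (wire-vertex w adjacent to a fresh node-vertex u which has one attached open wire-vertex, with connection instructions attaching w to c, plus a recursive nonterminal) / X → (same without the nonterminal) generates exactly the graphs with one central node-vertex connected via single-wire-vertex wires to n peripheral node-vertices, each vertex having one open-ended wire. -/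
/-- An extended graph: a graph together with a connection relation
C ⊆ Σ × Γ × Γ × V × {in,out} (here Bool, `true` = in). -/
structure ExtGraph extends LGraph where
  C : Finset (VLab × ELab × ELab × ℕ × Bool)

/-- Well-formedness of an extended graph. -/
def WFE (H : ExtGraph) : Prop :=
  (∀ e ∈ H.E, e.1 ∈ H.V ∧ e.2.2 ∈ H.V ∧ e.1 ≠ e.2.2) ∧ (∀ c ∈ H.C, c.2.2.2.1 ∈ H.V)

/-- Extended graph homomorphism: preserves vertices, labels, edges and
connection instructions. -/
def ExtHom (f : ℕ → ℕ) (H K : ExtGraph) : Prop :=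
  (∀ v ∈ H.V, f v ∈ K.V) ∧
  (∀ v ∈ H.V, K.lab (f v) = H.lab v) ∧
  (∀ e ∈ H.E, (f e.1, e.2.1, f e.2.2) ∈ K.E) ∧
  (∀ c ∈ H.C, (c.1, c.2.1, c.2.2.1, f c.2.2.2.1, c.2.2.2.2) ∈ K.C)

/-- Extended graph isomorphism. -/
def ExtIso (H K : ExtGraph) : Prop :=
  ∃ f : ℕ → ℕ, Set.BijOn f ↑H.V ↑K.V ∧
    (∀ v ∈ H.V, K.lab (f v) = H.lab v) ∧
    (∀ u l w, u ∈ H.V → w ∈ H.V → ((u, l, w) ∈ H.E ↔ (f u, l, f w) ∈ K.E)) ∧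
    (∀ σ β γ x d, x ∈ H.V → ((σ, β, γ, x, d) ∈ H.C ↔ (σ, β, γ, f x, d) ∈ K.C))

/-- Bridge edges established by "in" connection instructions of `D` when
substituting `D` for vertex `v` of `H`: for (σ,β,γ,x,in) ∈ C_D and a σ-labelled
vertex w of H with a β-labelled edge into v, add a γ-labelled edge from w to x. -/
def bridgeIn (H : ExtGraph) (v : ℕ) (D : ExtGraph) : Finset (ℕ × ELab × ℕ) :=
  ((D.C ×ˢ H.E).filter (fun q =>
      q.1.2.2.2.2 = true ∧ q.2.2.2 = v ∧ q.2.2.1 = q.1.2.1 ∧ H.lab q.2.1 = q.1.1)).image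
    (fun q => (q.2.1, q.1.2.2.1, q.1.2.2.2.1))

/-- Bridge edges established by "out" connection instructions of `D`. -/
def bridgeOut (H : ExtGraph) (v : ℕ) (D : ExtGraph) : Finset (ℕ × ELab × ℕ) :=
  ((D.C ×ˢ H.E).filter (fun q =>
      q.1.2.2.2.2 = false ∧ q.2.1 = v ∧ q.2.2.1 = q.1.2.1 ∧ H.lab q.2.2.2 = q.1.1)).image
    (fun q => (q.1.2.2.2.1, q.1.2.2.1, q.2.2.2))

/-- Connection relation of the substitution: instructions of H not pointing at v,
together with compositions of instructions of H pointing at v with instructions of D. -/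
def substC (H : ExtGraph) (v : ℕ) (D : ExtGraph) : Finset (VLab × ELab × ELab × ℕ × Bool) :=
  H.C.filter (fun c => c.2.2.2.1 ≠ v) ∪
  ((H.C ×ˢ D.C).filter (fun q =>
      q.1.2.2.2.1 = v ∧ q.2.1 = q.1.1 ∧ q.2.2.1 = q.1.2.2.1 ∧ q.2.2.2.2.2 = q.1.2.2.2.2)).image
    (fun q => (q.1.1, q.1.2.1, q.2.2.2.1, q.2.2.2.2.1, q.1.2.2.2.2))

/-- Substitution of the extended graph `D` for vertex `v` in `H`. -/
def subst (H : ExtGraph) (v : ℕ) (D : ExtGraph) : ExtGraph where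
  V := H.V.erase v ∪ D.V
  E := H.E.filter (fun e => e.1 ≠ v ∧ e.2.2 ≠ v) ∪ D.E ∪ bridgeIn H v D ∪ bridgeOut H v D
  lab := fun x => if x ∈ D.V then D.lab x else H.lab x
  C := substC H v D

/-- An edNCE grammar: an (index set of) productions X → (D,C) and an initial
nonterminal label. -/
structure Grammar where
  ι : Type
  lhs : ι → ℕ
  rhs : ι → ExtGraph
  S : ℕ

/-- The initial extended graph: a single vertex `z` labelled by the nonterminal `s`. -/
def sn (s z : ℕ) : ExtGraph := ⟨⟨{z}, ∅, fun _ => VLab.nt s⟩, ∅⟩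

/-- A derivation step replacing the nonterminal vertex `v` using production `p`
(applied via a fresh isomorphic copy `D` of its right-hand side). -/
def DerStepAt (G : Grammar) (v : ℕ) (p : G.ι) (H H' : ExtGraph) : Prop :=
  v ∈ H.V ∧ H.lab v = VLab.nt (G.lhs p) ∧
  ∃ D : ExtGraph, WFE D ∧ ExtIso D (G.rhs p) ∧ (∀ x ∈ D.V, x ∉ H.V) ∧ H' = subst H v D

def DerStep (G : Grammar) (H H' : ExtGraph) : Prop := ∃ v p, DerStepAt G v p H H'

/-- A terminal (extended) graph: no nonterminal vertices. -/
def Terminal (H : ExtGraph) : Prop := ∀ v ∈ H.V, (H.lab v).isNT = false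

/-- Star grammar, S-production: central node-vertex c (0) with pendant
wire-vertex (1) and nonterminal X (2), with an edge from c into X. -/
def SDS : ExtGraph :=
  ⟨⟨{0, 1, 2}, {(0, ELab.plain 0, 1), (0, ELab.plain 0, 2)},
    fun x => if x = 0 then VLab.node 0 else if x = 1 then VLab.wire 0 else VLab.nt 1⟩, ∅⟩

/-- Star grammar, recursive X-production: a wire-vertex w (0) adjacent to a fresh
node-vertex u (1) with its pendant wire-vertex (2), plus a recursive nonterminal
X (3); connection instructions attach w and the new X to the centre c. -/
def SXrec : ExtGraph :=
  ⟨⟨{0, 1, 2, 3}, {(0, ELab.plain 0, 1), (1, ELab.plain 0, 2)},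
    fun x => if x = 0 then VLab.wire 0 else if x = 1 then VLab.node 0
             else if x = 2 then VLab.wire 0 else VLab.nt 1⟩,
   {(VLab.node 0, ELab.plain 0, ELab.plain 0, 0, true),
    (VLab.node 0, ELab.plain 0, ELab.plain 0, 3, true)}⟩

/-- Star grammar, terminating X-production: same as the recursive one but
without the nonterminal. -/
def SXterm : ExtGraph :=
  ⟨⟨{0, 1, 2}, {(0, ELab.plain 0, 1), (1, ELab.plain 0, 2)},
    fun x => if x = 0 then VLab.wire 0 else if x = 1 then VLab.node 0 else VLab.wire 0⟩,
   {(VLab.node 0, ELab.plain 0, ELab.plain 0, 0, true)}⟩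

/-- The star grammar. -/
def SGram : Grammar :=
  ⟨Fin 3, fun p => if p = 0 then 0 else 1,
   fun p => if p = 0 then SDS else if p = 1 then SXrec else SXterm, 0⟩

/-- The star string graph sS_n: a central node-vertex (0) with pendant
wire-vertex (1), and for each i < n a peripheral node-vertex (2+3i) with pendant
wire-vertex (3+3i), joined to the centre through the wire-vertex (4+3i). -/
def sSn (n : ℕ) : LGraph :=
  ⟨{0, 1} ∪ (Finset.range n).image (fun i => 2 + 3 * i) ∪
     (Finset.range n).image (fun i => 3 + 3 * i) ∪
     (Finset.range n).image (fun i => 4 + 3 * i),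
   {((0 : ℕ), ELab.plain 0, (1 : ℕ))} ∪
     (Finset.range n).image (fun i => ((0 : ℕ), ELab.plain 0, 4 + 3 * i)) ∪
     (Finset.range n).image (fun i => (4 + 3 * i, ELab.plain 0, 2 + 3 * i)) ∪
     (Finset.range n).image (fun i => (2 + 3 * i, ELab.plain 0, 3 + 3 * i)),
   fun x => if x = 0 then VLab.node 0 else if x = 1 then VLab.wire 0
            else if (x - 2) % 3 = 0 then VLab.node 0 else VLab.wire 0⟩

-- ==================== auxiliary development ====================

abbrev pZ : ELab := ELab.plain 0

/-- the label formula of sSn -/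
def L : ℕ → VLab := fun x =>
  if x = 0 then VLab.node 0 else if x = 1 then VLab.wire 0
  else if (x - 2) % 3 = 0 then VLab.node 0 else VLab.wire 0

lemma sSn_lab (n : ℕ) : (sSn n).lab = L := rfl

lemma mem_sV {n x : ℕ} : x ∈ (sSn n).V ↔ x < 3*n+2 := by
  simp only [sSn, Finset.mem_union, Finset.mem_insert, Finset.mem_singleton,
    Finset.mem_image, Finset.mem_range]
  constructor
  · rintro (((h|⟨i,hi,rfl⟩)|⟨i,hi,rfl⟩)|⟨i,hi,rfl⟩)
    · rcases h with rfl|rfl <;> omega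
    all_goals omega
  · intro h
    rcases Nat.lt_or_ge x 2 with h2|h2
    · left; left; left; omega
    · have hd := Nat.div_add_mod (x-2) 3
      have hm : (x-2) % 3 < 3 := Nat.mod_lt _ (by omega)
      set i := (x-2)/3 with hi
      have hin : i < n := by omega
      interval_cases h3 : (x-2) % 3
      · left; left; right; exact ⟨i, hin, by omega⟩
      · left; right; exact ⟨i, hin, by omega⟩
      · right; exact ⟨i, hin, by omega⟩

lemma mem_sE {n : ℕ} {e : ℕ × ELab × ℕ} : e ∈ (sSn n).E ↔
    e = (0, pZ, 1) ∨ ∃ i < n, e = (0, pZ, 4+3*i) ∨ e = (4+3*i, pZ, 2+3*i) ∨ e = (2+3*i, pZ, 3+3*i) := by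
  simp only [sSn, Finset.mem_union, Finset.mem_singleton, Finset.mem_image, Finset.mem_range]
  constructor
  · rintro (((h|⟨i,hi,h⟩)|⟨i,hi,h⟩)|⟨i,hi,h⟩)
    · exact Or.inl h
    · exact Or.inr ⟨i, hi, Or.inl h.symm⟩
    · exact Or.inr ⟨i, hi, Or.inr (Or.inl h.symm)⟩
    · exact Or.inr ⟨i, hi, Or.inr (Or.inr h.symm)⟩
  · rintro (h|⟨i,hi,(rfl|rfl|rfl)⟩)
    · exact Or.inl (Or.inl (Or.inl h))
    · exact Or.inl (Or.inl (Or.inr ⟨i,hi,rfl⟩))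
    · exact Or.inl (Or.inr ⟨i,hi,rfl⟩)
    · exact Or.inr ⟨i,hi,rfl⟩

lemma L0 : L 0 = VLab.node 0 := rfl
lemma L1 : L 1 = VLab.wire 0 := rfl
lemma Lu (i : ℕ) : L (2+3*i) = VLab.node 0 := by
  unfold L; rw [if_neg (by omega), if_neg (by omega), if_pos (by omega)]
lemma Lpw (i : ℕ) : L (3+3*i) = VLab.wire 0 := by
  unfold L; rw [if_neg (by omega), if_neg (by omega), if_neg (by omega)]
lemma Lw (i : ℕ) : L (4+3*i) = VLab.wire 0 := by
  unfold L; rw [if_neg (by omega), if_neg (by omega), if_neg (by omega)]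

lemma L_not_nt (x k : ℕ) : L x ≠ VLab.nt k := by
  unfold L; split
  · simp
  · split
    · simp
    · split <;> simp

lemma sE_endpoints {n : ℕ} {e : ℕ × ELab × ℕ} (h : e ∈ (sSn n).E) :
    e.1 ∈ (sSn n).V ∧ e.2.2 ∈ (sSn n).V ∧ e.1 ≠ e.2.2 ∧ e.2.1 = pZ := by
  rw [mem_sE] at h
  rcases h with rfl|⟨i,hi,(rfl|rfl|rfl)⟩ <;> dsimp only <;>
    exact ⟨mem_sV.2 (by omega), mem_sV.2 (by omega), by omega, rfl⟩
def mapE (f : ℕ → ℕ) (e : ℕ × ELab × ℕ) : ℕ × ELab × ℕ := (f e.1, e.2.1, f e.2.2)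

/-- canonical vertex set with nonterminal -/
def cV (n : ℕ) : Finset ℕ := (sSn n).V ∪ {3*n+5}
def cE (n : ℕ) : Finset (ℕ × ELab × ℕ) := (sSn n).E ∪ {(0, pZ, 3*n+5)}

lemma mem_cV {n x : ℕ} : x ∈ cV n ↔ x < 3*n+2 ∨ x = 3*n+5 := by
  simp [cV, mem_sV, or_comm]

lemma mem_cE {n : ℕ} {e : ℕ × ELab × ℕ} : e ∈ cE n ↔ e ∈ (sSn n).E ∨ e = (0, pZ, 3*n+5) := by
  simp [cE, or_comm]

lemma cE_endpoints {n : ℕ} {e : ℕ × ELab × ℕ} (h : e ∈ cE n) :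
    e.1 ∈ cV n ∧ e.2.2 ∈ cV n ∧ e.1 ≠ e.2.2 ∧ e.2.1 = pZ := by
  rcases mem_cE.1 h with h|rfl
  · obtain ⟨h1, h2, h3, h4⟩ := sE_endpoints h
    exact ⟨Finset.mem_union_left _ h1, Finset.mem_union_left _ h2, h3, h4⟩
  · exact ⟨mem_cV.2 (Or.inl (by omega)), mem_cV.2 (Or.inr rfl), by dsimp; omega, rfl⟩

/-- sentential form with one nonterminal, image of the canonical one under f -/
def GenF (n : ℕ) (f : ℕ → ℕ) (H : ExtGraph) : Prop :=
  Set.InjOn f ↑(cV n) ∧ H.V = (cV n).image f ∧ H.E = (cE n).image (mapE f) ∧ H.C = ∅ ∧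
  (∀ x ∈ (sSn n).V, H.lab (f x) = L x) ∧ H.lab (f (3*n+5)) = VLab.nt 1

/-- terminal form -/
def FinF (n : ℕ) (f : ℕ → ℕ) (H : ExtGraph) : Prop :=
  Set.InjOn f ↑(sSn n).V ∧ H.V = (sSn n).V.image f ∧ H.E = (sSn n).E.image (mapE f) ∧
  H.C = ∅ ∧ (∀ x ∈ (sSn n).V, H.lab (f x) = L x)

/-- shape of a fresh copy of SDS -/
def InitShape (D : ExtGraph) (c pw t : ℕ) : Prop :=
  D.V = {c, pw, t} ∧ c ≠ pw ∧ c ≠ t ∧ pw ≠ t ∧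
  D.E = {(c, pZ, pw), (c, pZ, t)} ∧ D.C = ∅ ∧
  D.lab c = VLab.node 0 ∧ D.lab pw = VLab.wire 0 ∧ D.lab t = VLab.nt 1

/-- shape of a fresh copy of SXrec: w wire into u node into pw wire, t nonterminal -/
def RecShape (D : ExtGraph) (w u pw t : ℕ) : Prop :=
  D.V = {w, u, pw, t} ∧ w ≠ u ∧ w ≠ pw ∧ w ≠ t ∧ u ≠ pw ∧ u ≠ t ∧ pw ≠ t ∧
  D.E = {(w, pZ, u), (u, pZ, pw)} ∧
  D.C = {(VLab.node 0, pZ, pZ, w, true), (VLab.node 0, pZ, pZ, t, true)} ∧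
  D.lab w = VLab.wire 0 ∧ D.lab u = VLab.node 0 ∧ D.lab pw = VLab.wire 0 ∧ D.lab t = VLab.nt 1

/-- shape of a fresh copy of SXterm -/
def TermShape (D : ExtGraph) (w u pw : ℕ) : Prop :=
  D.V = {w, u, pw} ∧ w ≠ u ∧ w ≠ pw ∧ u ≠ pw ∧
  D.E = {(w, pZ, u), (u, pZ, pw)} ∧
  D.C = {(VLab.node 0, pZ, pZ, w, true)} ∧
  D.lab w = VLab.wire 0 ∧ D.lab u = VLab.node 0 ∧ D.lab pw = VLab.wire 0
section SubstCompute
variable {n : ℕ} {f : ℕ → ℕ} {H D : ExtGraph}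

lemma GenF.fmem (hG : GenF n f H) {x : ℕ} (hx : x ∈ cV n) : f x ∈ H.V := by
  rw [hG.2.1]; exact Finset.mem_image_of_mem f hx

lemma sV_sub_cV {n : ℕ} : (sSn n).V ⊆ cV n := Finset.subset_union_left

lemma GenF.fne (hG : GenF n f H) {x : ℕ} (hx : x ∈ (sSn n).V) : f x ≠ f (3*n+5) := by
  intro h
  have := hG.1 (by exact_mod_cast sV_sub_cV hx) (by simp [mem_cV]) h
  rw [mem_sV] at hx; omega

lemma cE_target {n : ℕ} {e : ℕ × ELab × ℕ} (h : e ∈ cE n) (ht : e.2.2 = 3*n+5) :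
    e = (0, pZ, 3*n+5) := by
  rcases mem_cE.1 h with h|rfl
  · have := (sE_endpoints h).2.1
    rw [mem_sV] at this; omega
  · rfl

lemma GenF.erase_eq (hG : GenF n f H) :
    H.V.erase (f (3*n+5)) = (sSn n).V.image f := by
  ext y
  simp only [Finset.mem_erase, hG.2.1, Finset.mem_image]
  constructor
  · rintro ⟨hne, x, hx, rfl⟩
    refine ⟨x, ?_, rfl⟩
    rcases mem_cV.1 hx with h|rfl
    · exact mem_sV.2 h
    · exact absurd rfl hne
  · rintro ⟨x, hx, rfl⟩
    exact ⟨hG.fne hx, x, sV_sub_cV hx, rfl⟩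

lemma GenF.filter_eq (hG : GenF n f H) :
    H.E.filter (fun e => e.1 ≠ f (3*n+5) ∧ e.2.2 ≠ f (3*n+5)) = (sSn n).E.image (mapE f) := by
  ext e
  simp only [Finset.mem_filter, hG.2.2.1, Finset.mem_image]
  constructor
  · rintro ⟨⟨e₀, he₀, rfl⟩, h1, h2⟩
    refine ⟨e₀, ?_, rfl⟩
    rcases mem_cE.1 he₀ with h|rfl
    · exact h
    · exact absurd rfl h2
  · rintro ⟨e₀, he₀, rfl⟩
    obtain ⟨h1, h2, _, _⟩ := sE_endpoints he₀
    exact ⟨⟨e₀, mem_cE.2 (Or.inl he₀), rfl⟩, hG.fne h1, hG.fne h2⟩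

lemma zero_mem_sV {n : ℕ} : (0:ℕ) ∈ (sSn n).V := mem_sV.2 (by omega)

lemma GenF.bridgeIn_eq (hG : GenF n f H)
    (hC : ∀ c ∈ D.C, c.1 = VLab.node 0 ∧ c.2.1 = pZ ∧ c.2.2.1 = pZ ∧ c.2.2.2.2 = true) :
    bridgeIn H (f (3*n+5)) D = D.C.image (fun c => (f 0, pZ, c.2.2.2.1)) := by
  ext e
  simp only [bridgeIn, Finset.mem_image, Finset.mem_filter, Finset.mem_product]
  constructor
  · rintro ⟨⟨c, e'⟩, ⟨⟨hc, he'⟩, hdir, htgt, hβ, hσ⟩, rfl⟩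
    obtain ⟨hc1, hc2, hc3, _⟩ := hC c hc
    rw [hG.2.2.1, Finset.mem_image] at he'
    obtain ⟨e₀, he₀, rfl⟩ := he'
    have : e₀.2.2 = 3*n+5 := by
      have := hG.1 (by exact_mod_cast (cE_endpoints he₀).2.1) (by simp [mem_cV]) htgt
      exact this
    have he0 := cE_target he₀ this
    refine ⟨c, hc, ?_⟩
    have : (mapE f e₀).1 = f 0 := by rw [he0]; rfl
    rw [this, hc3]
  · rintro ⟨c, hc, rfl⟩
    obtain ⟨hc1, hc2, hc3, hc4⟩ := hC c hc
    refine ⟨⟨c, (f 0, pZ, f (3*n+5))⟩, ⟨⟨hc, ?_⟩, hc4, rfl, by dsimp; rw [hc2], ?_⟩, by dsimp; rw [hc3]⟩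
    · rw [hG.2.2.1, Finset.mem_image]
      exact ⟨(0, pZ, 3*n+5), mem_cE.2 (Or.inr rfl), rfl⟩
    · dsimp; rw [hG.2.2.2.2.1 0 zero_mem_sV, L0, hc1]

lemma bridgeOut_empty {v : ℕ} (hC : ∀ c ∈ D.C, c.2.2.2.2 = true) :
    bridgeOut H v D = ∅ := by
  ext e
  simp only [bridgeOut, Finset.mem_image, Finset.mem_filter, Finset.mem_product,
    Finset.notMem_empty, iff_false]
  rintro ⟨⟨c, e'⟩, ⟨⟨hc, _⟩, hdir, _⟩, _⟩
  have := hC c hc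
  simp_all

lemma substC_empty {v : ℕ} (hC : H.C = ∅) : substC H v D = ∅ := by
  simp [substC, hC]

end SubstCompute
lemma mem_cV_succ {n x : ℕ} : x ∈ cV (n+1) ↔
    x ∈ (sSn n).V ∨ x = 2+3*n ∨ x = 3+3*n ∨ x = 4+3*n ∨ x = 3*n+8 := by
  rw [mem_cV, mem_sV]; omega

lemma mem_sV_succ {n x : ℕ} : x ∈ (sSn (n+1)).V ↔
    x ∈ (sSn n).V ∨ x = 2+3*n ∨ x = 3+3*n ∨ x = 4+3*n := by
  rw [mem_sV, mem_sV]; omega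

lemma mem_sE_succ {n : ℕ} {e : ℕ × ELab × ℕ} : e ∈ (sSn (n+1)).E ↔
    e ∈ (sSn n).E ∨ e = (0,pZ,4+3*n) ∨ e = (4+3*n,pZ,2+3*n) ∨ e = (2+3*n,pZ,3+3*n) := by
  rw [mem_sE, mem_sE]
  constructor
  · rintro (h|⟨i,hi,h⟩)
    · exact Or.inl (Or.inl h)
    · rcases Nat.lt_succ_iff_lt_or_eq.1 hi with hi|rfl
      · exact Or.inl (Or.inr ⟨i, hi, h⟩)
      · tauto
  · rintro ((h|⟨i,hi,h⟩)|h|h|h)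
    · exact Or.inl h
    · exact Or.inr ⟨i, by omega, h⟩
    all_goals exact Or.inr ⟨n, by omega, by tauto⟩

lemma mem_cE_succ {n : ℕ} {e : ℕ × ELab × ℕ} : e ∈ cE (n+1) ↔
    e ∈ (sSn n).E ∨ e = (0,pZ,4+3*n) ∨ e = (4+3*n,pZ,2+3*n) ∨ e = (2+3*n,pZ,3+3*n)
      ∨ e = (0,pZ,3*n+8) := by
  rw [mem_cE, mem_sE_succ]
  constructor
  · rintro (h|rfl)
    · tauto
    · right; right; right; right; show _ = (0, pZ, 3*n+8); rw [show 3*(n+1)+5 = 3*n+8 by ring]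
  · rintro (h|h|h|h|rfl)
    · tauto
    · tauto
    · tauto
    · tauto
    · right; show (0, pZ, 3*n+8) = _; rw [show 3*(n+1)+5 = 3*n+8 by ring]

/-- the extended map after a recursive step -/
def grec (n : ℕ) (f : ℕ → ℕ) (w u pw t : ℕ) : ℕ → ℕ := fun x =>
  if x = 2+3*n then u else if x = 3+3*n then pw else if x = 4+3*n then w
  else if x = 3*n+8 then t else f x

lemma subst_rec {n : ℕ} {f : ℕ → ℕ} {H D : ExtGraph} {w u pw t : ℕ}
    (hG : GenF n f H) (hD : RecShape D w u pw t) (fresh : ∀ x ∈ D.V, x ∉ H.V) :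
    GenF (n+1) (grec n f w u pw t) (subst H (f (3*n+5)) D) := by
  obtain ⟨hDV, hwu, hwp, hwt, hup, hut, hpt, hDE, hDC, lw, lu, lp, lt⟩ := hD
  set g := grec n f w u pw t with hg
  have hwH : w ∉ H.V := fresh w (by rw [hDV]; simp)
  have huH : u ∉ H.V := fresh u (by rw [hDV]; simp)
  have hpH : pw ∉ H.V := fresh pw (by rw [hDV]; simp)
  have htH : t ∉ H.V := fresh t (by rw [hDV]; simp)
  have hfNe : ∀ x ∈ cV n, f x ≠ w ∧ f x ≠ u ∧ f x ≠ pw ∧ f x ≠ t := fun x hx =>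
    ⟨fun h => hwH (h ▸ hG.fmem hx), fun h => huH (h ▸ hG.fmem hx),
     fun h => hpH (h ▸ hG.fmem hx), fun h => htH (h ▸ hG.fmem hx)⟩
  have gval_old : ∀ x ∈ (sSn n).V, g x = f x := by
    intro x hx; rw [mem_sV] at hx
    rw [hg]; unfold grec
    rw [if_neg (by omega), if_neg (by omega), if_neg (by omega), if_neg (by omega)]
  have g2 : g (2+3*n) = u := by rw [hg]; unfold grec; rw [if_pos rfl]
  have g3 : g (3+3*n) = pw := by
    rw [hg]; unfold grec; rw [if_neg (by omega), if_pos rfl]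
  have g4 : g (4+3*n) = w := by
    rw [hg]; unfold grec; rw [if_neg (by omega), if_neg (by omega), if_pos rfl]
  have g8 : g (3*n+8) = t := by
    rw [hg]; unfold grec
    rw [if_neg (by omega), if_neg (by omega), if_neg (by omega), if_pos rfl]
  have g8' : g (3*(n+1)+5) = t := by rw [show 3*(n+1)+5 = 3*n+8 by ring, g8]
  have hCshape : ∀ c ∈ D.C, c.1 = VLab.node 0 ∧ c.2.1 = pZ ∧ c.2.2.1 = pZ ∧ c.2.2.2.2 = true := by
    rw [hDC]; intro c hc
    simp only [Finset.mem_insert, Finset.mem_singleton] at hc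
    rcases hc with rfl|rfl <;> exact ⟨rfl, rfl, rfl, rfl⟩
  have hInj : Set.InjOn g ↑(cV (n+1)) := by
    intro a ha b hb hab
    have ha' := mem_cV_succ.1 (Finset.mem_coe.1 ha)
    have hb' := mem_cV_succ.1 (Finset.mem_coe.1 hb)
    rcases ha' with ha'|rfl|rfl|rfl|rfl <;> rcases hb' with hb'|rfl|rfl|rfl|rfl <;>
      (try simp only [g2, g3, g4, g8] at hab) <;>
      first
        | rfl
        | exact hG.1 (Finset.mem_coe.2 (sV_sub_cV ha')) (Finset.mem_coe.2 (sV_sub_cV hb'))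
            (by rwa [gval_old _ ha', gval_old _ hb'] at hab)
        | (rw [gval_old _ ha'] at hab; exact absurd hab ((hfNe _ (sV_sub_cV ha')).1))
        | (rw [gval_old _ ha'] at hab; exact absurd hab ((hfNe _ (sV_sub_cV ha')).2.1))
        | (rw [gval_old _ ha'] at hab; exact absurd hab ((hfNe _ (sV_sub_cV ha')).2.2.1))
        | (rw [gval_old _ ha'] at hab; exact absurd hab ((hfNe _ (sV_sub_cV ha')).2.2.2))
        | (rw [gval_old _ hb'] at hab; exact absurd hab.symm ((hfNe _ (sV_sub_cV hb')).1))
        | (rw [gval_old _ hb'] at hab; exact absurd hab.symm ((hfNe _ (sV_sub_cV hb')).2.1))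
        | (rw [gval_old _ hb'] at hab; exact absurd hab.symm ((hfNe _ (sV_sub_cV hb')).2.2.1))
        | (rw [gval_old _ hb'] at hab; exact absurd hab.symm ((hfNe _ (sV_sub_cV hb')).2.2.2))
        | exact absurd hab hwu | exact absurd hab.symm hwu
        | exact absurd hab hwp | exact absurd hab.symm hwp
        | exact absurd hab hwt | exact absurd hab.symm hwt
        | exact absurd hab hup | exact absurd hab.symm hup
        | exact absurd hab hut | exact absurd hab.symm hut
        | exact absurd hab hpt | exact absurd hab.symm hpt
  have hV : H.V.erase (f (3*n+5)) ∪ D.V = (cV (n+1)).image g := by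
    rw [hG.erase_eq, hDV]
    ext y
    simp only [Finset.mem_union, Finset.mem_image, Finset.mem_insert, Finset.mem_singleton]
    constructor
    · rintro (⟨x,hx,rfl⟩|rfl|rfl|rfl|rfl)
      · exact ⟨x, mem_cV_succ.2 (Or.inl hx), gval_old x hx⟩
      · exact ⟨4+3*n, mem_cV_succ.2 (Or.inr (Or.inr (Or.inr (Or.inl rfl)))), g4⟩
      · exact ⟨2+3*n, mem_cV_succ.2 (Or.inr (Or.inl rfl)), g2⟩
      · exact ⟨3+3*n, mem_cV_succ.2 (Or.inr (Or.inr (Or.inl rfl))), g3⟩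
      · exact ⟨3*n+8, mem_cV_succ.2 (Or.inr (Or.inr (Or.inr (Or.inr rfl)))), g8⟩
    · rintro ⟨x, hx, rfl⟩
      rcases mem_cV_succ.1 hx with hx'|rfl|rfl|rfl|rfl
      · exact Or.inl ⟨x, hx', (gval_old x hx').symm⟩
      · rw [g2]; exact Or.inr (Or.inr (Or.inl rfl))
      · rw [g3]; exact Or.inr (Or.inr (Or.inr (Or.inl rfl)))
      · rw [g4]; exact Or.inr (Or.inl rfl)
      · rw [g8]; exact Or.inr (Or.inr (Or.inr (Or.inr rfl)))
  have mapE_old : ∀ e ∈ (sSn n).E, mapE g e = mapE f e := by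
    intro e he
    obtain ⟨h1, h2, _, _⟩ := sE_endpoints he
    unfold mapE; rw [gval_old _ h1, gval_old _ h2]
  have hE : H.E.filter (fun e => e.1 ≠ f (3*n+5) ∧ e.2.2 ≠ f (3*n+5)) ∪ D.E ∪
      bridgeIn H (f (3*n+5)) D ∪ bridgeOut H (f (3*n+5)) D = (cE (n+1)).image (mapE g) := by
    rw [hG.filter_eq, hDE, hG.bridgeIn_eq hCshape, bridgeOut_empty (fun c hc => (hCshape c hc).2.2.2),
      hDC]
    ext e
    simp only [Finset.mem_union, Finset.mem_image, Finset.mem_insert, Finset.mem_singleton,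
      Finset.notMem_empty, or_false]
    constructor
    · rintro ((⟨e₀,he₀,rfl⟩|rfl|rfl)|⟨c,(rfl|rfl),rfl⟩)
      · exact ⟨e₀, mem_cE_succ.2 (Or.inl he₀), mapE_old e₀ he₀⟩
      · refine ⟨(4+3*n, pZ, 2+3*n), mem_cE_succ.2 (Or.inr (Or.inr (Or.inl rfl))), ?_⟩
        unfold mapE; rw [g4, g2]
      · refine ⟨(2+3*n, pZ, 3+3*n), mem_cE_succ.2 (Or.inr (Or.inr (Or.inr (Or.inl rfl)))), ?_⟩
        unfold mapE; rw [g2, g3]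
      · refine ⟨(0, pZ, 4+3*n), mem_cE_succ.2 (Or.inr (Or.inl rfl)), ?_⟩
        unfold mapE; rw [g4, gval_old 0 zero_mem_sV]
      · refine ⟨(0, pZ, 3*n+8), mem_cE_succ.2 (Or.inr (Or.inr (Or.inr (Or.inr rfl)))), ?_⟩
        unfold mapE; rw [g8, gval_old 0 zero_mem_sV]
    · rintro ⟨e₀, he₀, rfl⟩
      rcases mem_cE_succ.1 he₀ with h|rfl|rfl|rfl|rfl
      · exact Or.inl (Or.inl ⟨e₀, h, (mapE_old e₀ h).symm⟩)
      · refine Or.inr ⟨(VLab.node 0, pZ, pZ, w, true), Or.inl rfl, ?_⟩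
        unfold mapE; rw [g4, gval_old 0 zero_mem_sV]
      · left; right; left; unfold mapE; rw [g4, g2]
      · left; right; right; unfold mapE; rw [g2, g3]
      · refine Or.inr ⟨(VLab.node 0, pZ, pZ, t, true), Or.inr rfl, ?_⟩
        unfold mapE; rw [g8, gval_old 0 zero_mem_sV]
  have hfD : ∀ x ∈ (sSn n).V, f x ∉ D.V := by
    intro x hx
    rw [hDV]
    obtain ⟨h1,h2,h3,h4⟩ := hfNe x (sV_sub_cV hx)
    simp [h1,h2,h3,h4]
  refine ⟨hInj, hV, hE, substC_empty hG.2.2.2.1, ?_, ?_⟩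
  · intro x hx
    rcases mem_sV_succ.1 hx with h|rfl|rfl|rfl
    · show (if g x ∈ D.V then D.lab (g x) else H.lab (g x)) = L x
      rw [gval_old _ h, if_neg (hfD x h)]
      exact hG.2.2.2.2.1 x h
    · show (if g (2+3*n) ∈ D.V then D.lab (g (2+3*n)) else H.lab (g (2+3*n))) = L (2+3*n)
      rw [g2, if_pos (by rw [hDV]; simp), lu, Lu]
    · show (if g (3+3*n) ∈ D.V then D.lab (g (3+3*n)) else H.lab (g (3+3*n))) = L (3+3*n)
      rw [g3, if_pos (by rw [hDV]; simp), lp, Lpw]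
    · show (if g (4+3*n) ∈ D.V then D.lab (g (4+3*n)) else H.lab (g (4+3*n))) = L (4+3*n)
      rw [g4, if_pos (by rw [hDV]; simp), lw, Lw]
  · show (if g (3*(n+1)+5) ∈ D.V then D.lab (g (3*(n+1)+5)) else H.lab (g (3*(n+1)+5))) = _
    rw [g8', if_pos (by rw [hDV]; simp), lt]
/-- the extended map after the terminating step -/
def gterm (n : ℕ) (f : ℕ → ℕ) (w u pw : ℕ) : ℕ → ℕ := fun x =>
  if x = 2+3*n then u else if x = 3+3*n then pw else if x = 4+3*n then w else f x

lemma subst_term {n : ℕ} {f : ℕ → ℕ} {H D : ExtGraph} {w u pw : ℕ}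
    (hG : GenF n f H) (hD : TermShape D w u pw) (fresh : ∀ x ∈ D.V, x ∉ H.V) :
    FinF (n+1) (gterm n f w u pw) (subst H (f (3*n+5)) D) := by
  obtain ⟨hDV, hwu, hwp, hup, hDE, hDC, lw, lu, lp⟩ := hD
  set g := gterm n f w u pw with hg
  have hwH : w ∉ H.V := fresh w (by rw [hDV]; simp)
  have huH : u ∉ H.V := fresh u (by rw [hDV]; simp)
  have hpH : pw ∉ H.V := fresh pw (by rw [hDV]; simp)
  have hfNe : ∀ x ∈ cV n, f x ≠ w ∧ f x ≠ u ∧ f x ≠ pw := fun x hx =>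
    ⟨fun h => hwH (h ▸ hG.fmem hx), fun h => huH (h ▸ hG.fmem hx),
     fun h => hpH (h ▸ hG.fmem hx)⟩
  have gval_old : ∀ x ∈ (sSn n).V, g x = f x := by
    intro x hx; rw [mem_sV] at hx
    rw [hg]; unfold gterm
    rw [if_neg (by omega), if_neg (by omega), if_neg (by omega)]
  have g2 : g (2+3*n) = u := by rw [hg]; unfold gterm; rw [if_pos rfl]
  have g3 : g (3+3*n) = pw := by
    rw [hg]; unfold gterm; rw [if_neg (by omega), if_pos rfl]
  have g4 : g (4+3*n) = w := by
    rw [hg]; unfold gterm; rw [if_neg (by omega), if_neg (by omega), if_pos rfl]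
  have hCshape : ∀ c ∈ D.C, c.1 = VLab.node 0 ∧ c.2.1 = pZ ∧ c.2.2.1 = pZ ∧ c.2.2.2.2 = true := by
    rw [hDC]; intro c hc
    simp only [Finset.mem_singleton] at hc
    subst hc; exact ⟨rfl, rfl, rfl, rfl⟩
  have hInj : Set.InjOn g ↑((sSn (n+1)).V) := by
    intro a ha b hb hab
    have ha' := mem_sV_succ.1 (Finset.mem_coe.1 ha)
    have hb' := mem_sV_succ.1 (Finset.mem_coe.1 hb)
    rcases ha' with ha'|rfl|rfl|rfl <;> rcases hb' with hb'|rfl|rfl|rfl <;>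
      (try simp only [g2, g3, g4] at hab) <;>
      first
        | rfl
        | exact hG.1 (Finset.mem_coe.2 (sV_sub_cV ha')) (Finset.mem_coe.2 (sV_sub_cV hb'))
            (by rwa [gval_old _ ha', gval_old _ hb'] at hab)
        | (rw [gval_old _ ha'] at hab; exact absurd hab ((hfNe _ (sV_sub_cV ha')).1))
        | (rw [gval_old _ ha'] at hab; exact absurd hab ((hfNe _ (sV_sub_cV ha')).2.1))
        | (rw [gval_old _ ha'] at hab; exact absurd hab ((hfNe _ (sV_sub_cV ha')).2.2))
        | (rw [gval_old _ hb'] at hab; exact absurd hab.symm ((hfNe _ (sV_sub_cV hb')).1))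
        | (rw [gval_old _ hb'] at hab; exact absurd hab.symm ((hfNe _ (sV_sub_cV hb')).2.1))
        | (rw [gval_old _ hb'] at hab; exact absurd hab.symm ((hfNe _ (sV_sub_cV hb')).2.2))
        | exact absurd hab hwu | exact absurd hab.symm hwu
        | exact absurd hab hwp | exact absurd hab.symm hwp
        | exact absurd hab hup | exact absurd hab.symm hup
  have hV : H.V.erase (f (3*n+5)) ∪ D.V = ((sSn (n+1)).V).image g := by
    rw [hG.erase_eq, hDV]
    ext y
    simp only [Finset.mem_union, Finset.mem_image, Finset.mem_insert, Finset.mem_singleton]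
    constructor
    · rintro (⟨x,hx,rfl⟩|rfl|rfl|rfl)
      · exact ⟨x, mem_sV_succ.2 (Or.inl hx), gval_old x hx⟩
      · exact ⟨4+3*n, mem_sV_succ.2 (Or.inr (Or.inr (Or.inr rfl))), g4⟩
      · exact ⟨2+3*n, mem_sV_succ.2 (Or.inr (Or.inl rfl)), g2⟩
      · exact ⟨3+3*n, mem_sV_succ.2 (Or.inr (Or.inr (Or.inl rfl))), g3⟩
    · rintro ⟨x, hx, rfl⟩
      rcases mem_sV_succ.1 hx with hx'|rfl|rfl|rfl
      · exact Or.inl ⟨x, hx', (gval_old x hx').symm⟩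
      · rw [g2]; exact Or.inr (Or.inr (Or.inl rfl))
      · rw [g3]; exact Or.inr (Or.inr (Or.inr rfl))
      · rw [g4]; exact Or.inr (Or.inl rfl)
  have mapE_old : ∀ e ∈ (sSn n).E, mapE g e = mapE f e := by
    intro e he
    obtain ⟨h1, h2, _, _⟩ := sE_endpoints he
    unfold mapE; rw [gval_old _ h1, gval_old _ h2]
  have hE : H.E.filter (fun e => e.1 ≠ f (3*n+5) ∧ e.2.2 ≠ f (3*n+5)) ∪ D.E ∪
      bridgeIn H (f (3*n+5)) D ∪ bridgeOut H (f (3*n+5)) D = ((sSn (n+1)).E).image (mapE g) := by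
    rw [hG.filter_eq, hDE, hG.bridgeIn_eq hCshape, bridgeOut_empty (fun c hc => (hCshape c hc).2.2.2),
      hDC]
    ext e
    simp only [Finset.mem_union, Finset.mem_image, Finset.mem_insert, Finset.mem_singleton,
      Finset.notMem_empty, or_false]
    constructor
    · rintro ((⟨e₀,he₀,rfl⟩|rfl|rfl)|⟨c,rfl,rfl⟩)
      · exact ⟨e₀, mem_sE_succ.2 (Or.inl he₀), mapE_old e₀ he₀⟩
      · refine ⟨(4+3*n, pZ, 2+3*n), mem_sE_succ.2 (Or.inr (Or.inr (Or.inl rfl))), ?_⟩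
        unfold mapE; rw [g4, g2]
      · refine ⟨(2+3*n, pZ, 3+3*n), mem_sE_succ.2 (Or.inr (Or.inr (Or.inr rfl))), ?_⟩
        unfold mapE; rw [g2, g3]
      · refine ⟨(0, pZ, 4+3*n), mem_sE_succ.2 (Or.inr (Or.inl rfl)), ?_⟩
        unfold mapE; rw [g4, gval_old 0 zero_mem_sV]
    · rintro ⟨e₀, he₀, rfl⟩
      rcases mem_sE_succ.1 he₀ with h|rfl|rfl|rfl
      · exact Or.inl (Or.inl ⟨e₀, h, (mapE_old e₀ h).symm⟩)
      · refine Or.inr ⟨(VLab.node 0, pZ, pZ, w, true), rfl, ?_⟩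
        unfold mapE; rw [g4, gval_old 0 zero_mem_sV]
      · left; right; left; unfold mapE; rw [g4, g2]
      · left; right; right; unfold mapE; rw [g2, g3]
  have hfD : ∀ x ∈ (sSn n).V, f x ∉ D.V := by
    intro x hx
    rw [hDV]
    obtain ⟨h1,h2,h3⟩ := hfNe x (sV_sub_cV hx)
    simp [h1,h2,h3]
  refine ⟨hInj, hV, hE, substC_empty hG.2.2.2.1, ?_⟩
  intro x hx
  rcases mem_sV_succ.1 hx with h|rfl|rfl|rfl
  · show (if g x ∈ D.V then D.lab (g x) else H.lab (g x)) = L x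
    rw [gval_old _ h, if_neg (hfD x h)]
    exact hG.2.2.2.2.1 x h
  · show (if g (2+3*n) ∈ D.V then D.lab (g (2+3*n)) else H.lab (g (2+3*n))) = L (2+3*n)
    rw [g2, if_pos (by rw [hDV]; simp), lu, Lu]
  · show (if g (3+3*n) ∈ D.V then D.lab (g (3+3*n)) else H.lab (g (3+3*n))) = L (3+3*n)
    rw [g3, if_pos (by rw [hDV]; simp), lp, Lpw]
  · show (if g (4+3*n) ∈ D.V then D.lab (g (4+3*n)) else H.lab (g (4+3*n))) = L (4+3*n)
    rw [g4, if_pos (by rw [hDV]; simp), lw, Lw]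

/-- the map after the initial step -/
def ginit (c pw t : ℕ) : ℕ → ℕ := fun x => if x = 0 then c else if x = 1 then pw else t

lemma mem_sV_zero {x : ℕ} : x ∈ (sSn 0).V ↔ x = 0 ∨ x = 1 := by rw [mem_sV]; omega
lemma mem_sE_zero {e : ℕ × ELab × ℕ} : e ∈ (sSn 0).E ↔ e = (0, pZ, 1) := by
  rw [mem_sE]; simp

lemma subst_init {H D : ExtGraph} {z c pw t : ℕ}
    (hV : H.V = {z}) (hE : H.E = ∅) (hC : H.C = ∅) (hD : InitShape D c pw t) :
    GenF 0 (ginit c pw t) (subst H z D) := by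
  obtain ⟨hDV, hcp, hct, hpt, hDE, hDC, lc, lp, lt⟩ := hD
  have bIn : bridgeIn H z D = ∅ := by simp [bridgeIn, hE]
  have bOut : bridgeOut H z D = ∅ := by simp [bridgeOut, hE]
  have g0 : ginit c pw t 0 = c := rfl
  have g1 : ginit c pw t 1 = pw := rfl
  have g5 : ginit c pw t (3*0+5) = t := rfl
  have hInj : Set.InjOn (ginit c pw t) ↑(cV 0) := by
    intro a ha b hb hab
    have ha' := mem_cV.1 (Finset.mem_coe.1 ha)
    have hb' := mem_cV.1 (Finset.mem_coe.1 hb)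
    have ha'' : a = 0 ∨ a = 1 ∨ a = 5 := by omega
    have hb'' : b = 0 ∨ b = 1 ∨ b = 5 := by omega
    rcases ha'' with rfl|rfl|rfl <;> rcases hb'' with rfl|rfl|rfl <;>
      (try norm_num [ginit] at hab) <;>
      first
        | rfl
        | exact absurd hab hcp
        | exact absurd hab.symm hcp
        | exact absurd hab hct
        | exact absurd hab.symm hct
        | exact absurd hab hpt
        | exact absurd hab.symm hpt
  have hVeq : H.V.erase z ∪ D.V = (cV 0).image (ginit c pw t) := by
    rw [hV, Finset.erase_singleton, hDV]
    ext y
    simp only [Finset.mem_union, Finset.mem_image, Finset.mem_insert, Finset.mem_singleton,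
      Finset.empty_union, mem_cV]
    constructor
    · rintro (rfl|rfl|rfl)
      · exact ⟨0, by omega, rfl⟩
      · exact ⟨1, by omega, rfl⟩
      · exact ⟨5, by omega, rfl⟩
    · rintro ⟨x, hx, rfl⟩
      have : x = 0 ∨ x = 1 ∨ x = 5 := by omega
      rcases this with rfl|rfl|rfl
      · exact Or.inl rfl
      · exact Or.inr (Or.inl rfl)
      · exact Or.inr (Or.inr rfl)
  have hEeq : H.E.filter (fun e => e.1 ≠ z ∧ e.2.2 ≠ z) ∪ D.E ∪
      bridgeIn H z D ∪ bridgeOut H z D = (cE 0).image (mapE (ginit c pw t)) := by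
    rw [hE, bIn, bOut, hDE]
    ext e
    simp only [Finset.mem_union, Finset.mem_image, Finset.mem_insert, Finset.mem_singleton,
      Finset.notMem_empty, or_false, false_or, Finset.filter_empty, Finset.empty_union, mem_cE,
      mem_sE_zero]
    constructor
    · rintro (rfl|rfl)
      · exact ⟨(0, pZ, 1), Or.inl rfl, rfl⟩
      · exact ⟨(0, pZ, 3*0+5), Or.inr rfl, rfl⟩
    · rintro ⟨e₀, (rfl|rfl), rfl⟩
      · exact Or.inl rfl
      · exact Or.inr rfl
  refine ⟨hInj, hVeq, hEeq, substC_empty hC, ?_, ?_⟩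
  · intro x hx
    rcases mem_sV_zero.1 hx with rfl|rfl
    · show (if ginit c pw t 0 ∈ D.V then D.lab _ else H.lab _) = L 0
      rw [g0, if_pos (by rw [hDV]; simp), lc, L0]
    · show (if ginit c pw t 1 ∈ D.V then D.lab _ else H.lab _) = L 1
      rw [g1, if_pos (by rw [hDV]; simp), lp, L1]
  · show (if ginit c pw t (3*0+5) ∈ D.V then D.lab _ else H.lab _) = _
    rw [g5, if_pos (by rw [hDV]; simp), lt]
lemma RecShape.extIso {D : ExtGraph} {w u pw t : ℕ} (hD : RecShape D w u pw t) :
    ExtIso D SXrec := by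
  obtain ⟨hDV, hwu, hwp, hwt, hup, hut, hpt, hDE, hDC, lw, lu, lp, lt⟩ := hD
  refine ⟨fun x => if x = w then 0 else if x = u then 1 else if x = pw then 2 else 3, ?_, ?_, ?_, ?_⟩
  case refine_1 =>
    refine ⟨?_, ?_, ?_⟩
    · intro x hx
      rw [Finset.mem_coe, hDV] at hx
      simp only [Finset.mem_insert, Finset.mem_singleton] at hx
      rcases hx with rfl|rfl|rfl|rfl <;>
        simp [SXrec, hwu, hwp, hwt, hup, hut, hpt,
          Ne.symm hwu, Ne.symm hwp, Ne.symm hwt, Ne.symm hup, Ne.symm hut, Ne.symm hpt]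
    · intro a ha b hb hab
      rw [Finset.mem_coe, hDV] at ha hb
      simp only [Finset.mem_insert, Finset.mem_singleton] at ha hb
      rcases ha with rfl|rfl|rfl|rfl <;> rcases hb with rfl|rfl|rfl|rfl <;>
        simp_all [hwu, hwp, hwt, hup, hut, hpt,
          Ne.symm hwu, Ne.symm hwp, Ne.symm hwt, Ne.symm hup, Ne.symm hut, Ne.symm hpt]
    · intro y hy
      rw [Finset.mem_coe] at hy
      simp only [SXrec, Finset.mem_insert, Finset.mem_singleton, Finset.coe_insert,
        Set.mem_insert_iff, Finset.coe_singleton, Set.mem_singleton_iff] at hy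
      have hwD : w ∈ D.V := by rw [hDV]; simp
      have huD : u ∈ D.V := by rw [hDV]; simp
      have hpD : pw ∈ D.V := by rw [hDV]; simp
      have htD : t ∈ D.V := by rw [hDV]; simp
      rcases hy with rfl|rfl|rfl|rfl
      · exact ⟨w, hwD, by simp⟩
      · exact ⟨u, huD, by simp [Ne.symm hwu]⟩
      · exact ⟨pw, hpD, by simp [Ne.symm hwp, Ne.symm hup]⟩
      · exact ⟨t, htD, by simp [Ne.symm hwt, Ne.symm hut, Ne.symm hpt]⟩
  case refine_2 =>
    intro v hv
    rw [hDV] at hv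
    simp only [Finset.mem_insert, Finset.mem_singleton] at hv
    rcases hv with rfl|rfl|rfl|rfl <;>
      simp_all [SXrec, hwu, hwp, hwt, hup, hut, hpt,
        Ne.symm hwu, Ne.symm hwp, Ne.symm hwt, Ne.symm hup, Ne.symm hut, Ne.symm hpt]
  case refine_3 =>
    intro a l b ha hb
    rw [hDV] at ha hb
    simp only [Finset.mem_insert, Finset.mem_singleton] at ha hb
    rcases ha with rfl|rfl|rfl|rfl <;> rcases hb with rfl|rfl|rfl|rfl <;>
      simp [hDE, SXrec, Prod.mk.injEq, hwu, hwp, hwt, hup, hut, hpt,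
        Ne.symm hwu, Ne.symm hwp, Ne.symm hwt, Ne.symm hup, Ne.symm hut, Ne.symm hpt]
  case refine_4 =>
    intro σ β γ x d hx
    rw [hDV] at hx
    simp only [Finset.mem_insert, Finset.mem_singleton] at hx
    rcases hx with rfl|rfl|rfl|rfl <;>
      simp [hDC, SXrec, Prod.mk.injEq, hwu, hwp, hwt, hup, hut, hpt,
        Ne.symm hwu, Ne.symm hwp, Ne.symm hwt, Ne.symm hup, Ne.symm hut, Ne.symm hpt]
lemma TermShape.extIso {D : ExtGraph} {w u pw : ℕ} (hD : TermShape D w u pw) :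
    ExtIso D SXterm := by
  obtain ⟨hDV, hwu, hwp, hup, hDE, hDC, lw, lu, lp⟩ := hD
  refine ⟨fun x => if x = w then 0 else if x = u then 1 else 2, ?_, ?_, ?_, ?_⟩
  case refine_1 =>
    refine ⟨?_, ?_, ?_⟩
    · intro x hx
      rw [Finset.mem_coe, hDV] at hx
      simp only [Finset.mem_insert, Finset.mem_singleton] at hx
      rcases hx with rfl|rfl|rfl <;>
        simp [SXterm, hwu, hwp, hup, Ne.symm hwu, Ne.symm hwp, Ne.symm hup]
    · intro a ha b hb hab
      rw [Finset.mem_coe, hDV] at ha hb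
      simp only [Finset.mem_insert, Finset.mem_singleton] at ha hb
      rcases ha with rfl|rfl|rfl <;> rcases hb with rfl|rfl|rfl <;>
        simp_all [hwu, hwp, hup, Ne.symm hwu, Ne.symm hwp, Ne.symm hup]
    · intro y hy
      have hy : y = 0 ∨ y = 1 ∨ y = 2 := by
        rw [Finset.mem_coe] at hy; simpa [SXterm] using hy
      have hwD : w ∈ D.V := by rw [hDV]; simp
      have huD : u ∈ D.V := by rw [hDV]; simp
      have hpD : pw ∈ D.V := by rw [hDV]; simp
      rcases hy with rfl|rfl|rfl
      · exact ⟨w, hwD, by simp⟩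
      · exact ⟨u, huD, by simp [Ne.symm hwu]⟩
      · exact ⟨pw, hpD, by simp [Ne.symm hwp, Ne.symm hup]⟩
  case refine_2 =>
    intro v hv
    rw [hDV] at hv
    simp only [Finset.mem_insert, Finset.mem_singleton] at hv
    rcases hv with rfl|rfl|rfl <;>
      simp_all [SXterm, hwu, hwp, hup, Ne.symm hwu, Ne.symm hwp, Ne.symm hup]
  case refine_3 =>
    intro a l b ha hb
    rw [hDV] at ha hb
    simp only [Finset.mem_insert, Finset.mem_singleton] at ha hb
    rcases ha with rfl|rfl|rfl <;> rcases hb with rfl|rfl|rfl <;>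
      simp [hDE, SXterm, Prod.mk.injEq, hwu, hwp, hup, Ne.symm hwu, Ne.symm hwp, Ne.symm hup]
  case refine_4 =>
    intro σ β γ x d hx
    rw [hDV] at hx
    simp only [Finset.mem_insert, Finset.mem_singleton] at hx
    rcases hx with rfl|rfl|rfl <;>
      simp [hDC, SXterm, Prod.mk.injEq, hwu, hwp, hup, Ne.symm hwu, Ne.symm hwp, Ne.symm hup]

lemma InitShape.extIso {D : ExtGraph} {c pw t : ℕ} (hD : InitShape D c pw t) :
    ExtIso D SDS := by
  obtain ⟨hDV, hcp, hct, hpt, hDE, hDC, lc, lp, lt⟩ := hD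
  refine ⟨fun x => if x = c then 0 else if x = pw then 1 else 2, ?_, ?_, ?_, ?_⟩
  case refine_1 =>
    refine ⟨?_, ?_, ?_⟩
    · intro x hx
      rw [Finset.mem_coe, hDV] at hx
      simp only [Finset.mem_insert, Finset.mem_singleton] at hx
      rcases hx with rfl|rfl|rfl <;>
        simp [SDS, hcp, hct, hpt, Ne.symm hcp, Ne.symm hct, Ne.symm hpt]
    · intro a ha b hb hab
      rw [Finset.mem_coe, hDV] at ha hb
      simp only [Finset.mem_insert, Finset.mem_singleton] at ha hb
      rcases ha with rfl|rfl|rfl <;> rcases hb with rfl|rfl|rfl <;>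
        simp_all [hcp, hct, hpt, Ne.symm hcp, Ne.symm hct, Ne.symm hpt]
    · intro y hy
      have hy : y = 0 ∨ y = 1 ∨ y = 2 := by
        rw [Finset.mem_coe] at hy; simpa [SDS] using hy
      have hcD : c ∈ D.V := by rw [hDV]; simp
      have hpD : pw ∈ D.V := by rw [hDV]; simp
      have htD : t ∈ D.V := by rw [hDV]; simp
      rcases hy with rfl|rfl|rfl
      · exact ⟨c, hcD, by simp⟩
      · exact ⟨pw, hpD, by simp [Ne.symm hcp]⟩
      · exact ⟨t, htD, by simp [Ne.symm hct, Ne.symm hpt]⟩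
  case refine_2 =>
    intro v hv
    rw [hDV] at hv
    simp only [Finset.mem_insert, Finset.mem_singleton] at hv
    rcases hv with rfl|rfl|rfl <;>
      simp_all [SDS, hcp, hct, hpt, Ne.symm hcp, Ne.symm hct, Ne.symm hpt]
  case refine_3 =>
    intro a l b ha hb
    rw [hDV] at ha hb
    simp only [Finset.mem_insert, Finset.mem_singleton] at ha hb
    rcases ha with rfl|rfl|rfl <;> rcases hb with rfl|rfl|rfl <;>
      simp [hDE, SDS, Prod.mk.injEq, hcp, hct, hpt, Ne.symm hcp, Ne.symm hct, Ne.symm hpt]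
  case refine_4 =>
    intro σ β γ x d hx
    simp [hDC, SDS]

lemma RecShape.wfe {D : ExtGraph} {w u pw t : ℕ} (hD : RecShape D w u pw t) : WFE D := by
  obtain ⟨hDV, hwu, hwp, hwt, hup, hut, hpt, hDE, hDC, _, _, _, _⟩ := hD
  constructor
  · intro e he
    rw [hDE] at he
    simp only [Finset.mem_insert, Finset.mem_singleton] at he
    rcases he with rfl|rfl <;> rw [hDV] <;> simp [hwu, hup]
  · intro c hc
    rw [hDC] at hc
    simp only [Finset.mem_insert, Finset.mem_singleton] at hc
    rcases hc with rfl|rfl <;> rw [hDV] <;> simp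
lemma TermShape.wfe {D : ExtGraph} {w u pw : ℕ} (hD : TermShape D w u pw) : WFE D := by
  obtain ⟨hDV, hwu, hwp, hup, hDE, hDC, _, _, _⟩ := hD
  constructor
  · intro e he
    rw [hDE] at he
    simp only [Finset.mem_insert, Finset.mem_singleton] at he
    rcases he with rfl|rfl <;> rw [hDV] <;> simp [hwu, hup]
  · intro c hc
    rw [hDC] at hc
    simp only [Finset.mem_singleton] at hc
    subst hc; rw [hDV]; simp
lemma InitShape.wfe {D : ExtGraph} {c pw t : ℕ} (hD : InitShape D c pw t) : WFE D := by
  obtain ⟨hDV, hcp, hct, hpt, hDE, hDC, _, _, _⟩ := hD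
  constructor
  · intro e he
    rw [hDE] at he
    simp only [Finset.mem_insert, Finset.mem_singleton] at he
    rcases he with rfl|rfl <;> rw [hDV] <;> simp [hcp, hct]
  · intro c' hc'
    rw [hDC] at hc'
    simp at hc'
lemma extract_rec {D : ExtGraph} (hW : WFE D) (hI : ExtIso D SXrec) :
    ∃ w u pw t, RecShape D w u pw t := by
  obtain ⟨f, ⟨hmap, hinj, hsurj⟩, hlab, hedge, hC⟩ := hI
  obtain ⟨w, hw, hfw⟩ := hsurj (show (0:ℕ) ∈ ↑SXrec.V by simp [SXrec])
  obtain ⟨u, hu, hfu⟩ := hsurj (show (1:ℕ) ∈ ↑SXrec.V by simp [SXrec])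
  obtain ⟨pw, hp, hfp⟩ := hsurj (show (2:ℕ) ∈ ↑SXrec.V by simp [SXrec])
  obtain ⟨t, ht, hft⟩ := hsurj (show (3:ℕ) ∈ ↑SXrec.V by simp [SXrec])
  have fval : ∀ x, x ∈ D.V → x = w ∨ x = u ∨ x = pw ∨ x = t := by
    intro x hx
    have hfx := hmap (Finset.mem_coe.2 hx)
    have : f x = 0 ∨ f x = 1 ∨ f x = 2 ∨ f x = 3 := by
      rw [Finset.mem_coe] at hfx; simpa [SXrec] using hfx
    rcases this with h|h|h|h
    · exact Or.inl (hinj (Finset.mem_coe.2 hx) hw (h.trans hfw.symm))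
    · exact Or.inr (Or.inl (hinj (Finset.mem_coe.2 hx) hu (h.trans hfu.symm)))
    · exact Or.inr (Or.inr (Or.inl (hinj (Finset.mem_coe.2 hx) hp (h.trans hfp.symm))))
    · exact Or.inr (Or.inr (Or.inr (hinj (Finset.mem_coe.2 hx) ht (h.trans hft.symm))))
  have finv : ∀ x, x ∈ D.V → (f x = 0 → x = w) ∧ (f x = 1 → x = u) ∧ (f x = 2 → x = pw)
      ∧ (f x = 3 → x = t) := by
    intro x hx
    exact ⟨fun h => hinj (Finset.mem_coe.2 hx) hw (h.trans hfw.symm),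
           fun h => hinj (Finset.mem_coe.2 hx) hu (h.trans hfu.symm),
           fun h => hinj (Finset.mem_coe.2 hx) hp (h.trans hfp.symm),
           fun h => hinj (Finset.mem_coe.2 hx) ht (h.trans hft.symm)⟩
  have hwD := Finset.mem_coe.1 hw
  have huD := Finset.mem_coe.1 hu
  have hpD := Finset.mem_coe.1 hp
  have htD := Finset.mem_coe.1 ht
  have hwu : w ≠ u := fun h => by rw [h, hfu] at hfw; exact absurd hfw (by norm_num)
  have hwp : w ≠ pw := fun h => by rw [h, hfp] at hfw; exact absurd hfw (by norm_num)
  have hwt : w ≠ t := fun h => by rw [h, hft] at hfw; exact absurd hfw (by norm_num)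
  have hup : u ≠ pw := fun h => by rw [h, hfp] at hfu; exact absurd hfu (by norm_num)
  have hut : u ≠ t := fun h => by rw [h, hft] at hfu; exact absurd hfu (by norm_num)
  have hpt : pw ≠ t := fun h => by rw [h, hft] at hfp; exact absurd hfp (by norm_num)
  refine ⟨w, u, pw, t, ?_, hwu, hwp, hwt, hup, hut, hpt, ?_, ?_, ?_, ?_, ?_, ?_⟩
  · ext x
    simp only [Finset.mem_insert, Finset.mem_singleton]
    constructor
    · exact fval x
    · rintro (rfl|rfl|rfl|rfl) <;> assumption
  · ext e
    simp only [Finset.mem_insert, Finset.mem_singleton]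
    constructor
    · intro he
      obtain ⟨h1, h2, _⟩ := hW.1 e he
      have := (hedge e.1 e.2.1 e.2.2 h1 h2).1 he
      simp only [SXrec, Finset.mem_insert, Finset.mem_singleton, Prod.mk.injEq] at this
      obtain ⟨hi1, hi2, hi3, hi4⟩ := finv e.1 h1
      obtain ⟨hj1, hj2, hj3, hj4⟩ := finv e.2.2 h2
      rcases this with ⟨ha, hb, hc⟩|⟨ha, hb, hc⟩
      · left
        have : e = (e.1, e.2.1, e.2.2) := rfl
        rw [this, hi1 ha, hj2 hc, hb]
      · right
        have : e = (e.1, e.2.1, e.2.2) := rfl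
        rw [this, hi2 ha, hj3 hc, hb]
    · rintro (rfl|rfl)
      · exact (hedge w pZ u hwD huD).2 (by simp [SXrec, hfw, hfu])
      · exact (hedge u pZ pw huD hpD).2 (by simp [SXrec, hfu, hfp])
  · ext c
    simp only [Finset.mem_insert, Finset.mem_singleton]
    constructor
    · intro hc
      have hx := hW.2 c hc
      have := (hC c.1 c.2.1 c.2.2.1 c.2.2.2.1 c.2.2.2.2 hx).1 hc
      simp only [SXrec, Finset.mem_insert, Finset.mem_singleton, Prod.mk.injEq] at this
      obtain ⟨hi1, _, _, hi4⟩ := finv c.2.2.2.1 hx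
      rcases this with ⟨h1, h2, h3, h4, h5⟩|⟨h1, h2, h3, h4, h5⟩
      · left
        have : c = (c.1, c.2.1, c.2.2.1, c.2.2.2.1, c.2.2.2.2) := rfl
        rw [this, h1, h2, h3, hi1 h4, h5]
      · right
        have : c = (c.1, c.2.1, c.2.2.1, c.2.2.2.1, c.2.2.2.2) := rfl
        rw [this, h1, h2, h3, hi4 h4, h5]
    · rintro (rfl|rfl)
      · exact (hC _ _ _ w _ hwD).2 (by simp [SXrec, hfw])
      · exact (hC _ _ _ t _ htD).2 (by simp [SXrec, hft])
  · rw [← hlab w hwD, hfw]; rfl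
  · rw [← hlab u huD, hfu]; rfl
  · rw [← hlab pw hpD, hfp]; rfl
  · rw [← hlab t htD, hft]; rfl
lemma extract_term {D : ExtGraph} (hW : WFE D) (hI : ExtIso D SXterm) :
    ∃ w u pw, TermShape D w u pw := by
  obtain ⟨f, ⟨hmap, hinj, hsurj⟩, hlab, hedge, hC⟩ := hI
  obtain ⟨w, hw, hfw⟩ := hsurj (show (0:ℕ) ∈ ↑SXterm.V by simp [SXterm])
  obtain ⟨u, hu, hfu⟩ := hsurj (show (1:ℕ) ∈ ↑SXterm.V by simp [SXterm])
  obtain ⟨pw, hp, hfp⟩ := hsurj (show (2:ℕ) ∈ ↑SXterm.V by simp [SXterm])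
  have fval : ∀ x, x ∈ D.V → x = w ∨ x = u ∨ x = pw := by
    intro x hx
    have hfx := hmap (Finset.mem_coe.2 hx)
    have : f x = 0 ∨ f x = 1 ∨ f x = 2 := by
      rw [Finset.mem_coe] at hfx; simpa [SXterm] using hfx
    rcases this with h|h|h
    · exact Or.inl (hinj (Finset.mem_coe.2 hx) hw (h.trans hfw.symm))
    · exact Or.inr (Or.inl (hinj (Finset.mem_coe.2 hx) hu (h.trans hfu.symm)))
    · exact Or.inr (Or.inr (hinj (Finset.mem_coe.2 hx) hp (h.trans hfp.symm)))
  have finv : ∀ x, x ∈ D.V → (f x = 0 → x = w) ∧ (f x = 1 → x = u) ∧ (f x = 2 → x = pw) := by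
    intro x hx
    exact ⟨fun h => hinj (Finset.mem_coe.2 hx) hw (h.trans hfw.symm),
           fun h => hinj (Finset.mem_coe.2 hx) hu (h.trans hfu.symm),
           fun h => hinj (Finset.mem_coe.2 hx) hp (h.trans hfp.symm)⟩
  have hwD := Finset.mem_coe.1 hw
  have huD := Finset.mem_coe.1 hu
  have hpD := Finset.mem_coe.1 hp
  have hwu : w ≠ u := fun h => by rw [h, hfu] at hfw; exact absurd hfw (by norm_num)
  have hwp : w ≠ pw := fun h => by rw [h, hfp] at hfw; exact absurd hfw (by norm_num)
  have hup : u ≠ pw := fun h => by rw [h, hfp] at hfu; exact absurd hfu (by norm_num)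
  refine ⟨w, u, pw, ?_, hwu, hwp, hup, ?_, ?_, ?_, ?_, ?_⟩
  · ext x
    simp only [Finset.mem_insert, Finset.mem_singleton]
    constructor
    · exact fval x
    · rintro (rfl|rfl|rfl) <;> assumption
  · ext e
    simp only [Finset.mem_insert, Finset.mem_singleton]
    constructor
    · intro he
      obtain ⟨h1, h2, _⟩ := hW.1 e he
      have := (hedge e.1 e.2.1 e.2.2 h1 h2).1 he
      simp only [SXterm, Finset.mem_insert, Finset.mem_singleton, Prod.mk.injEq] at this
      obtain ⟨hi1, hi2, hi3⟩ := finv e.1 h1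
      obtain ⟨hj1, hj2, hj3⟩ := finv e.2.2 h2
      rcases this with ⟨ha, hb, hc⟩|⟨ha, hb, hc⟩
      · left
        have : e = (e.1, e.2.1, e.2.2) := rfl
        rw [this, hi1 ha, hj2 hc, hb]
      · right
        have : e = (e.1, e.2.1, e.2.2) := rfl
        rw [this, hi2 ha, hj3 hc, hb]
    · rintro (rfl|rfl)
      · exact (hedge w pZ u hwD huD).2 (by simp [SXterm, hfw, hfu])
      · exact (hedge u pZ pw huD hpD).2 (by simp [SXterm, hfu, hfp])
  · ext c
    simp only [Finset.mem_singleton]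
    constructor
    · intro hc
      have hx := hW.2 c hc
      have := (hC c.1 c.2.1 c.2.2.1 c.2.2.2.1 c.2.2.2.2 hx).1 hc
      simp only [SXterm, Finset.mem_singleton, Prod.mk.injEq] at this
      obtain ⟨hi1, _, _⟩ := finv c.2.2.2.1 hx
      obtain ⟨h1, h2, h3, h4, h5⟩ := this
      have : c = (c.1, c.2.1, c.2.2.1, c.2.2.2.1, c.2.2.2.2) := rfl
      rw [this, h1, h2, h3, hi1 h4, h5]
    · rintro rfl
      exact (hC _ _ _ w _ hwD).2 (by simp [SXterm, hfw])
  · rw [← hlab w hwD, hfw]; rfl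
  · rw [← hlab u huD, hfu]; rfl
  · rw [← hlab pw hpD, hfp]; rfl

lemma extract_init {D : ExtGraph} (hW : WFE D) (hI : ExtIso D SDS) :
    ∃ c pw t, InitShape D c pw t := by
  obtain ⟨f, ⟨hmap, hinj, hsurj⟩, hlab, hedge, hC⟩ := hI
  obtain ⟨c, hc, hfc⟩ := hsurj (show (0:ℕ) ∈ ↑SDS.V by simp [SDS])
  obtain ⟨pw, hp, hfp⟩ := hsurj (show (1:ℕ) ∈ ↑SDS.V by simp [SDS])
  obtain ⟨t, ht, hft⟩ := hsurj (show (2:ℕ) ∈ ↑SDS.V by simp [SDS])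
  have fval : ∀ x, x ∈ D.V → x = c ∨ x = pw ∨ x = t := by
    intro x hx
    have hfx := hmap (Finset.mem_coe.2 hx)
    have : f x = 0 ∨ f x = 1 ∨ f x = 2 := by
      rw [Finset.mem_coe] at hfx; simpa [SDS] using hfx
    rcases this with h|h|h
    · exact Or.inl (hinj (Finset.mem_coe.2 hx) hc (h.trans hfc.symm))
    · exact Or.inr (Or.inl (hinj (Finset.mem_coe.2 hx) hp (h.trans hfp.symm)))
    · exact Or.inr (Or.inr (hinj (Finset.mem_coe.2 hx) ht (h.trans hft.symm)))
  have finv : ∀ x, x ∈ D.V → (f x = 0 → x = c) ∧ (f x = 1 → x = pw) ∧ (f x = 2 → x = t) := by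
    intro x hx
    exact ⟨fun h => hinj (Finset.mem_coe.2 hx) hc (h.trans hfc.symm),
           fun h => hinj (Finset.mem_coe.2 hx) hp (h.trans hfp.symm),
           fun h => hinj (Finset.mem_coe.2 hx) ht (h.trans hft.symm)⟩
  have hcD := Finset.mem_coe.1 hc
  have hpD := Finset.mem_coe.1 hp
  have htD := Finset.mem_coe.1 ht
  have hcp : c ≠ pw := fun h => by rw [h, hfp] at hfc; exact absurd hfc (by norm_num)
  have hct : c ≠ t := fun h => by rw [h, hft] at hfc; exact absurd hfc (by norm_num)
  have hpt : pw ≠ t := fun h => by rw [h, hft] at hfp; exact absurd hfp (by norm_num)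
  refine ⟨c, pw, t, ?_, hcp, hct, hpt, ?_, ?_, ?_, ?_, ?_⟩
  · ext x
    simp only [Finset.mem_insert, Finset.mem_singleton]
    constructor
    · exact fval x
    · rintro (rfl|rfl|rfl) <;> assumption
  · ext e
    simp only [Finset.mem_insert, Finset.mem_singleton]
    constructor
    · intro he
      obtain ⟨h1, h2, _⟩ := hW.1 e he
      have := (hedge e.1 e.2.1 e.2.2 h1 h2).1 he
      simp only [SDS, Finset.mem_insert, Finset.mem_singleton, Prod.mk.injEq] at this
      obtain ⟨hi1, hi2, hi3⟩ := finv e.1 h1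
      obtain ⟨hj1, hj2, hj3⟩ := finv e.2.2 h2
      rcases this with ⟨ha, hb, hc'⟩|⟨ha, hb, hc'⟩
      · left
        have : e = (e.1, e.2.1, e.2.2) := rfl
        rw [this, hi1 ha, hj2 hc', hb]
      · right
        have : e = (e.1, e.2.1, e.2.2) := rfl
        rw [this, hi1 ha, hj3 hc', hb]
    · rintro (rfl|rfl)
      · exact (hedge c pZ pw hcD hpD).2 (by simp [SDS, hfc, hfp])
      · exact (hedge c pZ t hcD htD).2 (by simp [SDS, hfc, hft])
  · have : ∀ x ∈ D.C, False := by
      intro x hx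
      have hxV := hW.2 x hx
      have := (hC x.1 x.2.1 x.2.2.1 x.2.2.2.1 x.2.2.2.2 hxV).1 hx
      simpa [SDS] using this
    exact Finset.eq_empty_of_forall_notMem this
  · rw [← hlab c hcD, hfc]; rfl
  · rw [← hlab pw hpD, hfp]; rfl
  · rw [← hlab t htD, hft]; rfl
lemma fin3 (p : Fin 3) : p = 0 ∨ p = 1 ∨ p = 2 := by
  rcases p with ⟨v, h⟩
  interval_cases v
  · exact Or.inl rfl
  · exact Or.inr (Or.inl rfl)
  · exact Or.inr (Or.inr rfl)

lemma lhs0 : SGram.lhs (0 : Fin 3) = 0 := rfl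
lemma lhs1 : SGram.lhs (1 : Fin 3) = 1 := rfl
lemma lhs2 : SGram.lhs (2 : Fin 3) = 1 := rfl
lemma rhs0 : SGram.rhs (0 : Fin 3) = SDS := rfl
lemma rhs1 : SGram.rhs (1 : Fin 3) = SXrec := rfl
lemma rhs2 : SGram.rhs (2 : Fin 3) = SXterm := rfl

def InvP (H : ExtGraph) : Prop :=
  (∃ z, H.V = {z} ∧ H.E = ∅ ∧ H.C = ∅ ∧ H.lab z = VLab.nt 0) ∨
  (∃ n f, GenF n f H) ∨ (∃ n f, 1 ≤ n ∧ FinF n f H)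

lemma inv_step {H H' : ExtGraph} (hI : InvP H) (hs : DerStep SGram H H') : InvP H' := by
  obtain ⟨v, p, hvV, hvlab, D, hWFE, hIso, hfresh, rfl⟩ := hs
  rcases hI with ⟨z, hV, hE, hC, hlabz⟩ | ⟨n, f, hG⟩ | ⟨n, f, hn, hF⟩
  · have hvz : v = z := by rw [hV] at hvV; simpa using hvV
    subst hvz
    have hp : p = (0 : Fin 3) := by
      rcases fin3 p with rfl|rfl|rfl
      · rfl
      · rw [hlabz, lhs1] at hvlab; simp at hvlab
      · rw [hlabz, lhs2] at hvlab; simp at hvlab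
    subst hp
    rw [rhs0] at hIso
    obtain ⟨c, pw, t, hDS⟩ := extract_init hWFE hIso
    exact Or.inr (Or.inl ⟨0, _, subst_init hV hE hC hDS⟩)
  · rw [hG.2.1] at hvV
    obtain ⟨x, hx, rfl⟩ := Finset.mem_image.1 hvV
    rcases mem_cV.1 hx with hlt|rfl
    · have hLx := hG.2.2.2.2.1 x (mem_sV.2 hlt)
      rw [hLx] at hvlab
      exact absurd hvlab (L_not_nt _ _)
    · have hlab1 := hG.2.2.2.2.2
      rw [hlab1] at hvlab
      have hlp : SGram.lhs p = 1 := by injection hvlab with h; omega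
      rcases fin3 p with rfl|rfl|rfl
      · rw [lhs0] at hlp; omega
      · rw [rhs1] at hIso
        obtain ⟨w, u, pw, t, hDS⟩ := extract_rec hWFE hIso
        exact Or.inr (Or.inl ⟨n+1, _, subst_rec hG hDS hfresh⟩)
      · rw [rhs2] at hIso
        obtain ⟨w, u, pw, hDS⟩ := extract_term hWFE hIso
        exact Or.inr (Or.inr ⟨n+1, _, by omega, subst_term hG hDS hfresh⟩)
  · rw [hF.2.1] at hvV
    obtain ⟨x, hx, rfl⟩ := Finset.mem_image.1 hvV
    have hLx := hF.2.2.2.2 x hx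
    rw [hLx] at hvlab
    exact absurd hvlab (L_not_nt _ _)

lemma inv_rtg {H K : ExtGraph} (h : Relation.ReflTransGen (DerStep SGram) H K) (hI : InvP H) :
    InvP K := by
  induction h with
  | refl => exact hI
  | tail _ hs ih => exact inv_step ih hs

lemma L_isNT (x : ℕ) : (L x).isNT = false := by
  unfold L; split
  · rfl
  · split
    · rfl
    · split <;> rfl

lemma inv_terminal {H : ExtGraph} (hI : InvP H) (hT : Terminal H) :
    ∃ n f, 1 ≤ n ∧ FinF n f H := by
  rcases hI with ⟨z, hV, hE, hC, hlabz⟩ | ⟨n, f, hG⟩ | hF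
  · have := hT z (by rw [hV]; simp)
    rw [hlabz] at this
    simp [VLab.isNT] at this
  · have hm : f (3*n+5) ∈ H.V := hG.fmem (mem_cV.2 (Or.inr rfl))
    have := hT _ hm
    rw [hG.2.2.2.2.2] at this
    simp [VLab.isNT] at this
  · exact hF

lemma fin_iso {n : ℕ} {f : ℕ → ℕ} {H : ExtGraph} (hF : FinF n f H) :
    GIso H.toLGraph (sSn n) := by
  obtain ⟨hInj, hV, hE, _, hlab⟩ := hF
  set g := Function.invFunOn f ↑(sSn n).V with hgdef
  have hVc : (↑H.V : Set ℕ) = f '' ↑(sSn n).V := by rw [hV]; exact Finset.coe_image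
  have hbij : Set.BijOn f ↑(sSn n).V ↑H.V := by rw [hVc]; exact hInj.bijOn_image
  have hinv : Set.InvOn g f ↑(sSn n).V ↑H.V := hbij.invOn_invFunOn
  have hgbij : Set.BijOn g ↑H.V ↑(sSn n).V := Set.BijOn.symm hinv.symm hbij
  have hgf : ∀ x ∈ (sSn n).V, g (f x) = x := fun x hx => hinv.1 (Finset.mem_coe.2 hx)
  refine ⟨g, hgbij, ?_, ?_⟩
  · intro v hv
    rw [hV] at hv
    obtain ⟨x, hx, rfl⟩ := Finset.mem_image.1 hv
    rw [hgf x hx, sSn_lab]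
    exact (hlab x hx).symm
  · intro a l b ha hb
    rw [hV] at ha hb
    obtain ⟨x, hx, rfl⟩ := Finset.mem_image.1 ha
    obtain ⟨y, hy, rfl⟩ := Finset.mem_image.1 hb
    rw [hgf x hx, hgf y hy]
    constructor
    · intro h
      rw [hE] at h
      obtain ⟨e₀, he₀, heq⟩ := Finset.mem_image.1 h
      obtain ⟨hep1, hep2, _, _⟩ := sE_endpoints he₀
      have h1 : f e₀.1 = f x := congrArg Prod.fst heq
      have h2 : e₀.2.1 = l := congrArg (fun q => q.2.1) heq
      have h3 : f e₀.2.2 = f y := congrArg (fun q => q.2.2) heq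
      have e1 : e₀.1 = x := hInj (Finset.mem_coe.2 hep1) (Finset.mem_coe.2 hx) h1
      have e3 : e₀.2.2 = y := hInj (Finset.mem_coe.2 hep2) (Finset.mem_coe.2 hy) h3
      have : e₀ = (x, l, y) := by
        rw [show e₀ = (e₀.1, e₀.2.1, e₀.2.2) from rfl, e1, e3, h2]
      rw [← this]; exact he₀
    · intro h
      rw [hE]
      exact Finset.mem_image.2 ⟨(x, l, y), h, rfl⟩
def Dinit : ExtGraph :=
  ⟨⟨{0, 1, 5}, {(0, pZ, 1), (0, pZ, 5)},
    fun x => if x = 0 then VLab.node 0 else if x = 1 then VLab.wire 0 else VLab.nt 1⟩, ∅⟩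

lemma Dinit_shape : InitShape Dinit 0 1 5 :=
  ⟨rfl, by omega, by omega, by omega, rfl, rfl, rfl, rfl, rfl⟩

def Drec (n : ℕ) : ExtGraph :=
  ⟨⟨{4+3*n, 2+3*n, 3+3*n, 3*n+8}, {(4+3*n, pZ, 2+3*n), (2+3*n, pZ, 3+3*n)},
    fun x => if x = 4+3*n then VLab.wire 0 else if x = 2+3*n then VLab.node 0
             else if x = 3+3*n then VLab.wire 0 else VLab.nt 1⟩,
   {(VLab.node 0, pZ, pZ, 4+3*n, true), (VLab.node 0, pZ, pZ, 3*n+8, true)}⟩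

lemma Drec_shape (n : ℕ) : RecShape (Drec n) (4+3*n) (2+3*n) (3+3*n) (3*n+8) := by
  refine ⟨rfl, by omega, by omega, by omega, by omega, by omega, by omega, rfl, rfl, ?_, ?_, ?_, ?_⟩
  · show (if 4+3*n = 4+3*n then VLab.wire 0 else _) = VLab.wire 0
    rw [if_pos rfl]
  · show (if 2+3*n = 4+3*n then _ else if 2+3*n = 2+3*n then VLab.node 0 else _) = VLab.node 0
    rw [if_neg (by omega), if_pos rfl]
  · show (if 3+3*n = 4+3*n then _ else if 3+3*n = 2+3*n then _
        else if 3+3*n = 3+3*n then VLab.wire 0 else _) = VLab.wire 0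
    rw [if_neg (by omega), if_neg (by omega), if_pos rfl]
  · show (if 3*n+8 = 4+3*n then _ else if 3*n+8 = 2+3*n then _
        else if 3*n+8 = 3+3*n then _ else VLab.nt 1) = VLab.nt 1
    rw [if_neg (by omega), if_neg (by omega), if_neg (by omega)]

def Dterm (n : ℕ) : ExtGraph :=
  ⟨⟨{4+3*n, 2+3*n, 3+3*n}, {(4+3*n, pZ, 2+3*n), (2+3*n, pZ, 3+3*n)},
    fun x => if x = 4+3*n then VLab.wire 0 else if x = 2+3*n then VLab.node 0
             else VLab.wire 0⟩,
   {(VLab.node 0, pZ, pZ, 4+3*n, true)}⟩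

lemma Dterm_shape (n : ℕ) : TermShape (Dterm n) (4+3*n) (2+3*n) (3+3*n) := by
  refine ⟨rfl, by omega, by omega, by omega, rfl, rfl, ?_, ?_, ?_⟩
  · show (if 4+3*n = 4+3*n then VLab.wire 0 else _) = VLab.wire 0
    rw [if_pos rfl]
  · show (if 2+3*n = 4+3*n then _ else if 2+3*n = 2+3*n then VLab.node 0 else _) = VLab.node 0
    rw [if_neg (by omega), if_pos rfl]
  · show (if 3+3*n = 4+3*n then _ else if 3+3*n = 2+3*n then _ else VLab.wire 0) = VLab.wire 0
    rw [if_neg (by omega), if_neg (by omega)]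

lemma chain (n : ℕ) : ∃ (H : ExtGraph) (f : ℕ → ℕ),
    Relation.ReflTransGen (DerStep SGram) (sn 0 2) H ∧ GenF n f H ∧ (∀ x ∈ cV n, f x = x) := by
  induction n with
  | zero =>
    refine ⟨subst (sn 0 2) 2 Dinit, ginit 0 1 5, ?_, subst_init rfl rfl rfl Dinit_shape, ?_⟩
    · refine Relation.ReflTransGen.single ⟨2, (0 : Fin 3), ?_, ?_, Dinit, Dinit_shape.wfe,
        by rw [rhs0]; exact Dinit_shape.extIso, ?_, rfl⟩
      · show (2:ℕ) ∈ ({2} : Finset ℕ); simp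
      · rfl
      · intro x hx
        show x ∉ ({2} : Finset ℕ)
        have : x = 0 ∨ x = 1 ∨ x = 5 := by
          simpa [Dinit] using hx
        simp; omega
    · intro x hx
      have hx' := mem_cV.1 hx
      have : x = 0 ∨ x = 1 ∨ x = 5 := by omega
      rcases this with rfl|rfl|rfl <;> rfl
  | succ n ih =>
    obtain ⟨H, f, hrtg, hG, hid⟩ := ih
    have hHV : H.V = cV n := by
      rw [hG.2.1, Finset.image_congr (g := id) (fun x hx => hid x hx), Finset.image_id]
    have hfresh : ∀ x ∈ (Drec n).V, x ∉ H.V := by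
      intro x hx
      rw [hHV]
      have : x = 4+3*n ∨ x = 2+3*n ∨ x = 3+3*n ∨ x = 3*n+8 := by
        simpa [Drec] using hx
      intro hmem
      have := mem_cV.1 hmem
      omega
    have hv : f (3*n+5) = 3*n+5 := hid _ (mem_cV.2 (Or.inr rfl))
    refine ⟨subst H (f (3*n+5)) (Drec n), grec n f (4+3*n) (2+3*n) (3+3*n) (3*n+8), ?_,
      subst_rec hG (Drec_shape n) hfresh, ?_⟩
    · refine hrtg.tail ⟨f (3*n+5), (1 : Fin 3), hG.fmem (mem_cV.2 (Or.inr rfl)), ?_,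
        Drec n, (Drec_shape n).wfe, by rw [rhs1]; exact (Drec_shape n).extIso, hfresh, rfl⟩
      rw [show SGram.lhs (1 : Fin 3) = 1 from rfl]
      exact hG.2.2.2.2.2
    · intro x hx
      rcases mem_cV_succ.1 hx with hx'|rfl|rfl|rfl|rfl
      · show grec n f (4+3*n) (2+3*n) (3+3*n) (3*n+8) x = x
        unfold grec
        rw [mem_sV] at hx'
        rw [if_neg (by omega), if_neg (by omega), if_neg (by omega), if_neg (by omega)]
        exact hid x (sV_sub_cV (mem_sV.2 hx'))
      · show grec n f _ _ _ _ (2+3*n) = 2+3*n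
        unfold grec; rw [if_pos rfl]
      · show grec n f _ _ _ _ (3+3*n) = 3+3*n
        unfold grec; rw [if_neg (by omega), if_pos rfl]
      · show grec n f _ _ _ _ (4+3*n) = 4+3*n
        unfold grec; rw [if_neg (by omega), if_neg (by omega), if_pos rfl]
      · show grec n f _ _ _ _ (3*n+8) = 3*n+8
        unfold grec
        rw [if_neg (by omega), if_neg (by omega), if_neg (by omega), if_pos rfl]

lemma finF_terminal {n : ℕ} {g : ℕ → ℕ} {H : ExtGraph} (hF : FinF n g H) : Terminal H := by
  intro v hv
  rw [hF.2.1] at hv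
  obtain ⟨x, hx, rfl⟩ := Finset.mem_image.1 hv
  rw [hF.2.2.2.2 x hx]
  exact L_isNT x

lemma backward (n : ℕ) (hn : 1 ≤ n) : ∃ H : ExtGraph,
    (∃ z, Relation.ReflTransGen (DerStep SGram) (sn 0 z) H) ∧ Terminal H ∧
    GIso H.toLGraph (sSn n) := by
  obtain ⟨m, rfl⟩ : ∃ m, n = m + 1 := ⟨n - 1, by omega⟩
  obtain ⟨H, f, hrtg, hG, hid⟩ := chain m
  have hHV : H.V = cV m := by
    rw [hG.2.1, Finset.image_congr (g := id) (fun x hx => hid x hx), Finset.image_id]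
  have hfresh : ∀ x ∈ (Dterm m).V, x ∉ H.V := by
    intro x hx
    rw [hHV]
    have : x = 4+3*m ∨ x = 2+3*m ∨ x = 3+3*m := by
      simpa [Dterm] using hx
    intro hmem
    have := mem_cV.1 hmem
    omega
  have hF := subst_term hG (Dterm_shape m) hfresh
  refine ⟨subst H (f (3*m+5)) (Dterm m), ⟨2, ?_⟩, finF_terminal hF, fin_iso hF⟩
  refine hrtg.tail ⟨f (3*m+5), (2 : Fin 3), hG.fmem (mem_cV.2 (Or.inr rfl)), ?_,
    Dterm m, (Dterm_shape m).wfe, by rw [rhs2]; exact (Dterm_shape m).extIso, hfresh, rfl⟩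
  rw [show SGram.lhs (2 : Fin 3) = 1 from rfl]
  exact hG.2.2.2.2.2

/-- The language of the star grammar is exactly the family
{sS_n : n ≥ 1} of star string graphs, up to isomorphism. -/
theorem star_grammar_language :
    (∀ H : ExtGraph,
      (∃ z, Relation.ReflTransGen (DerStep SGram) (sn 0 z) H) → Terminal H →
      ∃ n, 1 ≤ n ∧ GIso H.toLGraph (sSn n)) ∧
    (∀ n, 1 ≤ n → ∃ H : ExtGraph,
      (∃ z, Relation.ReflTransGen (DerStep SGram) (sn 0 z) H) ∧ Terminal H ∧
      GIso H.toLGraph (sSn n)) := by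
  constructor
  · rintro H ⟨z, hrtg⟩ hT
    have hI : InvP H := inv_rtg hrtg (Or.inl ⟨z, rfl, rfl, rfl, rfl⟩)
    obtain ⟨n, f, hn, hF⟩ := inv_terminal hI hT
    exact ⟨n, hn, fin_iso hF⟩
  · exact backward
end

section
/- The substituted monomorphism is a monomorphism: given extended graphs G, D with x ∈ V_G, and injective extended graph homomorphisms m₁:G→G' and m₂:D→D' (with m₁(x) a vertex of G'), the map m₃ defined by m₃(v)=m₁(v) for v∈V_G∖{x} and m₃(v)=m₂(v) for v∈V_D is an injective extended graph homomorphism G[x/D] → G'[m₁(x)/D'], provided the images of m₁ and m₂ are suitably disjoint and m₁, m₂ reflect the neighbourhood structure of x and m₁(x). -/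
/-- The substituted map: use m₂ on the daughter graph and m₁ elsewhere. -/
def SM (m₁ m₂ : ℕ → ℕ) (D : ExtGraph) : ℕ → ℕ :=
  fun y => if y ∈ D.V then m₂ y else m₁ y

/-- The substituted monomorphism is a monomorphism: given injective
extended graph homomorphisms m₁ : G → G' and m₂ : D → D' with suitably disjoint
images which reflect the neighbourhood structure of x and m₁(x), the substituted
map SM(m₁,m₂,x) : G[x/D] → G'[m₁(x)/D'] is an injective extended graph homomorphism. -/
theorem substituted_monomorphism (G G' D D' : ExtGraph) (x : ℕ) (m₁ m₂ : ℕ → ℕ)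
    (hwfG : WFE G) (hwfG' : WFE G') (hwfD : WFE D) (hwfD' : WFE D')
    (hx : x ∈ G.V) (hxnt : (G.lab x).isNT = true)
    (h₁ : ExtHom m₁ G G') (h₁i : Set.InjOn m₁ ↑G.V)
    (h₂ : ExtHom m₂ D D') (h₂i : Set.InjOn m₂ ↑D.V)
    (hGD : ∀ a ∈ G.V, a ∉ D.V) (hGD' : ∀ a ∈ G'.V, a ∉ D'.V)
    (hdisj : ∀ a ∈ G.V, a ≠ x → ∀ b ∈ D.V, m₁ a ≠ m₂ b)
    (hrefl : ∀ w ∈ G.V, ∀ β : ELab,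
      ((m₁ w, β, m₁ x) ∈ G'.E ↔ (w, β, x) ∈ G.E) ∧
      ((m₁ x, β, m₁ w) ∈ G'.E ↔ (x, β, w) ∈ G.E)) :
    ExtHom (SM m₁ m₂ D) (subst G x D) (subst G' (m₁ x) D') ∧
    Set.InjOn (SM m₁ m₂ D) ↑(subst G x D).V := by

  obtain ⟨h₁V, h₁L, h₁E, h₁C⟩ := h₁
  obtain ⟨h₂V, h₂L, h₂E, h₂C⟩ := h₂
  have hSMG : ∀ v ∈ G.V, SM m₁ m₂ D v = m₁ v := by
    intro v hv; simp only [SM, if_neg (hGD v hv)]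
  have hSMD : ∀ v ∈ D.V, SM m₁ m₂ D v = m₂ v := by
    intro v hv; simp only [SM, if_pos hv]
  have hVmem : ∀ v ∈ (subst G x D).V, SM m₁ m₂ D v ∈ (subst G' (m₁ x) D').V := by
    intro v hv
    simp only [subst, Finset.mem_union, Finset.mem_erase] at hv ⊢
    rcases hv with ⟨hvx, hvG⟩ | hvD
    · left; rw [hSMG v hvG]
      exact ⟨fun h => hvx (h₁i hvG hx h), h₁V v hvG⟩
    · right; rw [hSMD v hvD]; exact h₂V v hvD
  refine ⟨⟨hVmem, ?_, ?_, ?_⟩, ?_⟩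
  · -- labels
    intro v hv
    simp only [subst, Finset.mem_union, Finset.mem_erase] at hv
    rcases hv with ⟨hvx, hvG⟩ | hvD
    · rw [hSMG v hvG]
      have h1 : m₁ v ∉ D'.V := hGD' _ (h₁V v hvG)
      simp only [subst, if_neg h1, if_neg (hGD v hvG)]
      exact h₁L v hvG
    · rw [hSMD v hvD]
      simp only [subst, if_pos (h₂V v hvD), if_pos hvD]
      exact h₂L v hvD
  · -- edges
    intro e he
    simp only [subst, Finset.mem_union] at he ⊢
    rcases he with ((heG | heD) | heBI) | heBO
    · simp only [Finset.mem_filter] at heG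
      obtain ⟨heE, h1, h2⟩ := heG
      obtain ⟨he1, he2, -⟩ := hwfG.1 e heE
      left; left; left
      rw [hSMG _ he1, hSMG _ he2]
      exact Finset.mem_filter.2 ⟨h₁E e heE, fun h => h1 (h₁i he1 hx h),
        fun h => h2 (h₁i he2 hx h)⟩
    · obtain ⟨he1, he2, -⟩ := hwfD.1 e heD
      left; left; right
      rw [hSMD _ he1, hSMD _ he2]
      exact h₂E e heD
    · -- bridgeIn
      simp only [bridgeIn, Finset.mem_image, Finset.mem_filter, Finset.mem_product] at heBI
      obtain ⟨⟨c, f⟩, ⟨⟨hcD, hfG⟩, hd, hfx, hβ, hσ⟩, heq⟩ := heBI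
      obtain ⟨hf1, hf2, hne⟩ := hwfG.1 f hfG
      have hcV : c.2.2.2.1 ∈ D.V := hwfD.2 c hcD
      left; right
      subst heq
      rw [hSMG _ hf1, hSMD _ hcV]
      refine Finset.mem_image.2
        ⟨((c.1, c.2.1, c.2.2.1, m₂ c.2.2.2.1, c.2.2.2.2), (m₁ f.1, f.2.1, m₁ f.2.2)),
          Finset.mem_filter.2 ⟨Finset.mem_product.2 ⟨h₂C c hcD, h₁E f hfG⟩, ?_⟩, rfl⟩
      simp only []
      refine ⟨hd, by rw [hfx], hβ, by rw [h₁L f.1 hf1, hσ]⟩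
    · -- bridgeOut
      simp only [bridgeOut, Finset.mem_image, Finset.mem_filter, Finset.mem_product] at heBO
      obtain ⟨⟨c, f⟩, ⟨⟨hcD, hfG⟩, hd, hfx, hβ, hσ⟩, heq⟩ := heBO
      obtain ⟨hf1, hf2, hne⟩ := hwfG.1 f hfG
      have hcV : c.2.2.2.1 ∈ D.V := hwfD.2 c hcD
      right
      subst heq
      rw [hSMG _ hf2, hSMD _ hcV]
      refine Finset.mem_image.2
        ⟨((c.1, c.2.1, c.2.2.1, m₂ c.2.2.2.1, c.2.2.2.2), (m₁ f.1, f.2.1, m₁ f.2.2)),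
          Finset.mem_filter.2 ⟨Finset.mem_product.2 ⟨h₂C c hcD, h₁E f hfG⟩, ?_⟩, rfl⟩
      refine ⟨hd, by rw [hfx], hβ, by rw [h₁L f.2.2 hf2, hσ]⟩
  · -- connections
    intro c hc
    simp only [subst, substC, Finset.mem_union, Finset.mem_filter, Finset.mem_image,
      Finset.mem_product] at hc ⊢
    rcases hc with ⟨hcG, hcx⟩ | ⟨⟨c₁, c₂⟩, ⟨⟨hc₁, hc₂⟩, ht, hσ, hβ, hdd⟩, heq⟩
    · left
      have hcV : c.2.2.2.1 ∈ G.V := hwfG.2 c hcG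
      rw [hSMG _ hcV]
      exact ⟨h₁C c hcG, fun h => hcx (h₁i hcV hx h)⟩
    · right
      have hcV : c₂.2.2.2.1 ∈ D.V := hwfD.2 c₂ hc₂
      refine ⟨⟨(c₁.1, c₁.2.1, c₁.2.2.1, m₁ c₁.2.2.2.1, c₁.2.2.2.2),
          (c₂.1, c₂.2.1, c₂.2.2.1, m₂ c₂.2.2.2.1, c₂.2.2.2.2)⟩,
        ⟨⟨h₁C c₁ hc₁, h₂C c₂ hc₂⟩, by rw [ht], hσ, hβ, hdd⟩, ?_⟩
      rw [← heq]
      simp only [hSMD _ hcV]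
  · -- injectivity
    intro a ha b hb hab
    simp only [Finset.coe_union, Finset.coe_erase, Set.mem_union, Set.mem_diff,
      Set.mem_singleton_iff, Finset.mem_coe, subst] at ha hb
    rcases ha with ⟨haG, hax⟩ | haD <;> rcases hb with ⟨hbG, hbx⟩ | hbD
    · rw [hSMG _ haG, hSMG _ hbG] at hab
      exact h₁i haG hbG hab
    · rw [hSMG _ haG, hSMD _ hbD] at hab
      exact absurd hab (hdisj a haG hax b hbD)
    · rw [hSMD _ haD, hSMG _ hbG] at hab
      exact absurd hab.symm (hdisj b hbG hbx a haD)
    · rw [hSMD _ haD, hSMD _ hbD] at hab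
      exact h₂i haD hbD hab
end

section
/- If G is a boundary edNCE (B-edNCE) grammar, then every sentential form of G contains no edges between nonterminal vertices and no connection instructions whose first component is a nonterminal label; in particular the boundary property is preserved under derivation steps. -/
/-- A boundary (B-edNCE) grammar: no production right-hand side has an edge
between nonterminal vertices, and no connection instruction refers to a
nonterminal vertex label. -/
def Boundary (G : Grammar) : Prop :=
  ∀ p : G.ι,
    (∀ e ∈ (G.rhs p).E,
      ¬(((G.rhs p).lab e.1).isNT = true ∧ ((G.rhs p).lab e.2.2).isNT = true)) ∧
    (∀ c ∈ (G.rhs p).C, c.1.isNT = false)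

/-- A sentential form of a grammar. -/
def Sentential (G : Grammar) (H : ExtGraph) : Prop :=
  ∃ z, Relation.ReflTransGen (DerStep G) (sn G.S z) H

/-- The induction invariant: well-formedness plus the boundary property. -/
def BInv (H : ExtGraph) : Prop :=
  WFE H ∧
  (∀ e ∈ H.E, ¬((H.lab e.1).isNT = true ∧ (H.lab e.2.2).isNT = true)) ∧
  (∀ c ∈ H.C, c.1.isNT = false)

lemma binv_step (G : Grammar) (hB : Boundary G) {H H' : ExtGraph}
    (h : DerStep G H H') (hI : BInv H) : BInv H' := by
  obtain ⟨v, p, hv, hlabv, D, hWD, ⟨f, hf1, hf2, hf3, hf4⟩, hdisj, rfl⟩ := h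
  obtain ⟨hWH, hEH, hCH⟩ := hI
  -- boundary facts transferred to the fresh copy D
  have hDE : ∀ e ∈ D.E, ¬((D.lab e.1).isNT = true ∧ (D.lab e.2.2).isNT = true) := by
    intro e he
    obtain ⟨h1, h2, _⟩ := hWD.1 e he
    have hmem : (f e.1, e.2.1, f e.2.2) ∈ (G.rhs p).E := (hf3 e.1 e.2.1 e.2.2 h1 h2).mp he
    have hb := (hB p).1 _ hmem
    simpa [hf2 e.1 h1, hf2 e.2.2 h2] using hb
  have hDC : ∀ c ∈ D.C, c.1.isNT = false := by
    rintro ⟨σ, β, γ, x, d⟩ hc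
    have hx : x ∈ D.V := hWD.2 _ hc
    have hmem : (σ, β, γ, f x, d) ∈ (G.rhs p).C := (hf4 σ β γ x d hx).mp hc
    exact (hB p).2 (σ, β, γ, f x, d) hmem
  -- label facts in the substituted graph
  have hlabH : ∀ x ∈ H.V, (subst H v D).lab x = H.lab x := by
    intro x hx
    have : x ∉ D.V := fun hxd => hdisj x hxd hx
    simp [subst, this]
  have hlabD : ∀ x ∈ D.V, (subst H v D).lab x = D.lab x := by
    intro x hx
    simp [subst, hx]
  -- edge membership decomposition
  have hmemE : ∀ e ∈ (subst H v D).E,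
      (e ∈ H.E ∧ e.1 ≠ v ∧ e.2.2 ≠ v) ∨ e ∈ D.E ∨ e ∈ bridgeIn H v D ∨ e ∈ bridgeOut H v D := by
    intro e he
    simp only [subst, Finset.mem_union, Finset.mem_filter] at he
    tauto
  have hVsub : (subst H v D).V = H.V.erase v ∪ D.V := rfl
  -- structure of bridge edges
  have hbin : ∀ e ∈ bridgeIn H v D,
      ∃ w γ x σ, e = (w, γ, x) ∧ (w, γ, x) = e ∧ w ∈ H.V ∧ w ≠ v ∧ x ∈ D.V ∧
        H.lab w = σ ∧ σ.isNT = false := by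
    intro e he
    simp only [bridgeIn, Finset.mem_image, Finset.mem_filter, Finset.mem_product] at he
    obtain ⟨⟨⟨σ, β, γ, x, d⟩, ⟨w, β', t⟩⟩, ⟨⟨hc, hEe⟩, hd, ht, hβ, hlw⟩, heq⟩ := he
    obtain ⟨hw, _, hne⟩ := hWH.1 _ hEe
    refine ⟨w, γ, x, σ, heq.symm, heq, hw, ?_, hWD.2 _ hc, hlw, hDC _ hc⟩
    simp only at ht
    exact fun hwv => hne (by simp [hwv, ht])
  have hbout : ∀ e ∈ bridgeOut H v D,
      ∃ x γ w σ, e = (x, γ, w) ∧ w ∈ H.V ∧ w ≠ v ∧ x ∈ D.V ∧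
        H.lab w = σ ∧ σ.isNT = false := by
    intro e he
    simp only [bridgeOut, Finset.mem_image, Finset.mem_filter, Finset.mem_product] at he
    obtain ⟨⟨⟨σ, β, γ, x, d⟩, ⟨s, β', w⟩⟩, ⟨⟨hc, hEe⟩, hd, hs, hβ, hlw⟩, heq⟩ := he
    obtain ⟨_, hw, hne⟩ := hWH.1 _ hEe
    refine ⟨x, γ, w, σ, heq.symm, hw, ?_, hWD.2 _ hc, hlw, hDC _ hc⟩
    simp only at hs
    exact fun hwv => hne (by simp [hwv, hs])
  have hdj : ∀ a ∈ H.V, ∀ b ∈ D.V, a ≠ b := by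
    intro a ha b hb hab
    exact hdisj b hb (hab ▸ ha)
  refine ⟨⟨?_, ?_⟩, ?_, ?_⟩
  · -- WFE: edges
    intro e he
    rcases hmemE e he with ⟨heH, h1, h2⟩ | heD | heI | heO
    · obtain ⟨ha, hb, hab⟩ := hWH.1 e heH
      rw [hVsub]
      exact ⟨Finset.mem_union_left _ (Finset.mem_erase.mpr ⟨h1, ha⟩),
        Finset.mem_union_left _ (Finset.mem_erase.mpr ⟨h2, hb⟩), hab⟩
    · obtain ⟨ha, hb, hab⟩ := hWD.1 e heD
      rw [hVsub]
      exact ⟨Finset.mem_union_right _ ha, Finset.mem_union_right _ hb, hab⟩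
    · obtain ⟨w, γ, x, σ, rfl, _, hw, hwv, hx, _, _⟩ := hbin e heI
      rw [hVsub]
      exact ⟨Finset.mem_union_left _ (Finset.mem_erase.mpr ⟨hwv, hw⟩),
        Finset.mem_union_right _ hx, hdj w hw x hx⟩
    · obtain ⟨x, γ, w, σ, rfl, hw, hwv, hx, _, _⟩ := hbout e heO
      rw [hVsub]
      exact ⟨Finset.mem_union_right _ hx,
        Finset.mem_union_left _ (Finset.mem_erase.mpr ⟨hwv, hw⟩),
        (hdj w hw x hx).symm⟩
  · -- WFE: connection instructions
    intro c hc
    have : c ∈ substC H v D := hc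
    simp only [substC, Finset.mem_union, Finset.mem_filter, Finset.mem_image,
      Finset.mem_product] at this
    rw [hVsub]
    rcases this with ⟨hcH, hne⟩ | ⟨⟨c1, c2⟩, ⟨⟨hc1, hc2⟩, _, _, _, _⟩, heq⟩
    · exact Finset.mem_union_left _ (Finset.mem_erase.mpr ⟨hne, hWH.2 c hcH⟩)
    · have := hWD.2 c2 hc2
      rw [← heq]
      exact Finset.mem_union_right _ this
  · -- boundary: edges
    intro e he
    rcases hmemE e he with ⟨heH, h1, h2⟩ | heD | heI | heO
    · obtain ⟨ha, hb, _⟩ := hWH.1 e heH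
      rw [hlabH e.1 ha, hlabH e.2.2 hb]
      exact hEH e heH
    · obtain ⟨ha, hb, _⟩ := hWD.1 e heD
      rw [hlabD e.1 ha, hlabD e.2.2 hb]
      exact hDE e heD
    · obtain ⟨w, γ, x, σ, rfl, _, hw, _, _, hlw, hσ⟩ := hbin e heI
      rintro ⟨hnt, _⟩
      rw [hlabH w hw] at hnt
      rw [hlw] at hnt
      simp [hnt] at hσ
    · obtain ⟨x, γ, w, σ, rfl, hw, _, _, hlw, hσ⟩ := hbout e heO
      rintro ⟨_, hnt⟩
      rw [hlabH w hw] at hnt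
      rw [hlw] at hnt
      simp [hnt] at hσ
  · -- boundary: connection instructions
    intro c hc
    have : c ∈ substC H v D := hc
    simp only [substC, Finset.mem_union, Finset.mem_filter, Finset.mem_image,
      Finset.mem_product] at this
    rcases this with ⟨hcH, _⟩ | ⟨⟨c1, c2⟩, ⟨⟨hc1, hc2⟩, _, _, _, _⟩, heq⟩
    · exact hCH c hcH
    · rw [← heq]
      exact hCH c1 hc1

/-- In a B-edNCE grammar, every sentential form contains no edges
between nonterminal vertices and no connection instruction whose first component
is a nonterminal label: the boundary property is preserved under derivation. -/
theorem boundary_preserved (G : Grammar) (hB : Boundary G)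
    (H : ExtGraph) (hS : Sentential G H) :
    (∀ e ∈ H.E, ¬((H.lab e.1).isNT = true ∧ (H.lab e.2.2).isNT = true)) ∧
    (∀ c ∈ H.C, c.1.isNT = false) := by
  obtain ⟨z, hder⟩ := hS
  have hbase : BInv (sn G.S z) := by
    refine ⟨⟨?_, ?_⟩, ?_, ?_⟩ <;> simp [sn, WFE]
  have : BInv H := by
    induction hder with
    | refl => exact hbase
    | tail _ hstep ih => exact binv_step G hB hstep ih
  exact ⟨this.2.1, this.2.2⟩
end

section
/- Extended graph substitution is associative in the following sense: if H contains distinct nonterminal vertices u and v, and D, E are extended graphs disjoint from H and from each other, then (H[u/D])[v/E] ≅ (H[v/E])[u/D]; substituting at distinct nonterminal vertices commutes. -/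
/-- The composed-instruction part of `substC`. -/
def compC (H : ExtGraph) (v : ℕ) (D : ExtGraph) : Finset (VLab × ELab × ELab × ℕ × Bool) :=
  ((H.C ×ˢ D.C).filter (fun q =>
      q.1.2.2.2.1 = v ∧ q.2.1 = q.1.1 ∧ q.2.2.1 = q.1.2.2.1 ∧ q.2.2.2.2.2 = q.1.2.2.2.2)).image
    (fun q => (q.1.1, q.1.2.1, q.2.2.2.1, q.2.2.2.2.1, q.1.2.2.2.2))

lemma subst_V' (H D : ExtGraph) (v : ℕ) : (subst H v D).V = H.V.erase v ∪ D.V := rfl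

lemma subst_E' (H D : ExtGraph) (v : ℕ) :
    (subst H v D).E = H.E.filter (fun e => e.1 ≠ v ∧ e.2.2 ≠ v) ∪ D.E ∪
      bridgeIn H v D ∪ bridgeOut H v D := rfl

lemma subst_C' (H D : ExtGraph) (v : ℕ) :
    (subst H v D).C = H.C.filter (fun c => c.2.2.2.1 ≠ v) ∪ compC H v D := rfl

lemma lab_subst (H D : ExtGraph) (u x : ℕ) (hD : ∀ y ∈ D.V, y ∉ H.V) (hx : x ∈ H.V) :
    (subst H u D).lab x = H.lab x := by
  show (if x ∈ D.V then D.lab x else H.lab x) = H.lab x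
  rw [if_neg (fun h => hD x h hx)]

lemma edge_into (H D : ExtGraph) (u v : ℕ) (hwfD : WFE D)
    (hD : ∀ x ∈ D.V, x ∉ H.V) (hv : v ∈ H.V) (huv : u ≠ v)
    (hadj : ∀ β : ELab, (u, β, v) ∉ H.E)
    (e : ℕ × ELab × ℕ) (he : e.2.2 = v) :
    e ∈ (subst H u D).E ↔ e ∈ H.E := by
  rw [subst_E']
  constructor
  · intro h
    rcases Finset.mem_union.1 h with h | h
    · rcases Finset.mem_union.1 h with h | h
      · rcases Finset.mem_union.1 h with h | h
        · exact (Finset.mem_filter.1 h).1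
        · exact absurd hv (hD _ (he ▸ (hwfD.1 e h).2.1))
      · exfalso
        rcases Finset.mem_image.1 h with ⟨q, hq, hqe⟩
        obtain ⟨hmem, _, _, _, _⟩ := Finset.mem_filter.1 hq
        have hqv : q.1.2.2.2.1 = v := by rw [← hqe] at he; exact he
        exact hD _ (hwfD.2 q.1 (Finset.mem_product.1 hmem).1) (hqv ▸ hv)
    · exfalso
      rcases Finset.mem_image.1 h with ⟨q, hq, hqe⟩
      obtain ⟨hmem, _, h1, _, _⟩ := Finset.mem_filter.1 hq
      have hqv : q.2.2.2 = v := by rw [← hqe] at he; exact he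
      have heH : (q.2.1, q.2.2.1, q.2.2.2) ∈ H.E := by
        simpa using (Finset.mem_product.1 hmem).2
      rw [h1, hqv] at heH
      exact hadj _ heH
  · intro h
    refine Finset.mem_union.2 (Or.inl (Finset.mem_union.2 (Or.inl (Finset.mem_union.2
      (Or.inl (Finset.mem_filter.2 ⟨h, ?_, ?_⟩))))))
    · intro h1
      have heH : (e.1, e.2.1, e.2.2) ∈ H.E := by simpa using h
      rw [h1, he] at heH
      exact hadj _ heH
    · rw [he]; exact fun hh => huv hh.symm

lemma edge_from (H D : ExtGraph) (u v : ℕ) (hwfD : WFE D)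
    (hD : ∀ x ∈ D.V, x ∉ H.V) (hv : v ∈ H.V) (huv : u ≠ v)
    (hadj : ∀ β : ELab, (v, β, u) ∉ H.E)
    (e : ℕ × ELab × ℕ) (he : e.1 = v) :
    e ∈ (subst H u D).E ↔ e ∈ H.E := by
  rw [subst_E']
  constructor
  · intro h
    rcases Finset.mem_union.1 h with h | h
    · rcases Finset.mem_union.1 h with h | h
      · rcases Finset.mem_union.1 h with h | h
        · exact (Finset.mem_filter.1 h).1
        · exact absurd hv (hD _ (he ▸ (hwfD.1 e h).1))
      · exfalso
        rcases Finset.mem_image.1 h with ⟨q, hq, hqe⟩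
        obtain ⟨hmem, _, h1, _, _⟩ := Finset.mem_filter.1 hq
        have hqv : q.2.1 = v := by rw [← hqe] at he; exact he
        have heH : (q.2.1, q.2.2.1, q.2.2.2) ∈ H.E := by
          simpa using (Finset.mem_product.1 hmem).2
        rw [h1, hqv] at heH
        exact hadj _ heH
    · exfalso
      rcases Finset.mem_image.1 h with ⟨q, hq, hqe⟩
      obtain ⟨hmem, _, _, _, _⟩ := Finset.mem_filter.1 hq
      have hqv : q.1.2.2.2.1 = v := by rw [← hqe] at he; exact he
      exact hD _ (hwfD.2 q.1 (Finset.mem_product.1 hmem).1) (hqv ▸ hv)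
  · intro h
    refine Finset.mem_union.2 (Or.inl (Finset.mem_union.2 (Or.inl (Finset.mem_union.2
      (Or.inl (Finset.mem_filter.2 ⟨h, ?_, ?_⟩))))))
    · rw [he]; exact fun hh => huv hh.symm
    · intro h1
      have heH : (e.1, e.2.1, e.2.2) ∈ H.E := by simpa using h
      rw [h1, he] at heH
      exact hadj _ heH

lemma bridgeIn_subst (H D E : ExtGraph) (u v : ℕ) (hwfH : WFE H) (hwfD : WFE D)
    (hD : ∀ x ∈ D.V, x ∉ H.V) (hv : v ∈ H.V) (huv : u ≠ v)
    (hadj : ∀ β : ELab, (u, β, v) ∉ H.E) :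
    bridgeIn (subst H u D) v E = bridgeIn H v E := by
  unfold bridgeIn
  congr 1
  ext q
  simp only [Finset.mem_filter, Finset.mem_product]
  constructor
  · rintro ⟨⟨hc, he⟩, hb, hvv, hβ, hlab⟩
    have heH : q.2 ∈ H.E := (edge_into H D u v hwfD hD hv huv hadj q.2 hvv).1 he
    refine ⟨⟨hc, heH⟩, hb, hvv, hβ, ?_⟩
    rw [← lab_subst H D u q.2.1 hD (hwfH.1 q.2 heH).1]
    exact hlab
  · rintro ⟨⟨hc, he⟩, hb, hvv, hβ, hlab⟩
    refine ⟨⟨hc, (edge_into H D u v hwfD hD hv huv hadj q.2 hvv).2 he⟩, hb, hvv, hβ, ?_⟩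
    rw [lab_subst H D u q.2.1 hD (hwfH.1 q.2 he).1]
    exact hlab

lemma bridgeOut_subst (H D E : ExtGraph) (u v : ℕ) (hwfH : WFE H) (hwfD : WFE D)
    (hD : ∀ x ∈ D.V, x ∉ H.V) (hv : v ∈ H.V) (huv : u ≠ v)
    (hadj : ∀ β : ELab, (v, β, u) ∉ H.E) :
    bridgeOut (subst H u D) v E = bridgeOut H v E := by
  unfold bridgeOut
  congr 1
  ext q
  simp only [Finset.mem_filter, Finset.mem_product]
  constructor
  · rintro ⟨⟨hc, he⟩, hb, hvv, hβ, hlab⟩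
    have heH : q.2 ∈ H.E := (edge_from H D u v hwfD hD hv huv hadj q.2 hvv).1 he
    refine ⟨⟨hc, heH⟩, hb, hvv, hβ, ?_⟩
    rw [← lab_subst H D u q.2.2.2 hD (hwfH.1 q.2 heH).2.1]
    exact hlab
  · rintro ⟨⟨hc, he⟩, hb, hvv, hβ, hlab⟩
    refine ⟨⟨hc, (edge_from H D u v hwfD hD hv huv hadj q.2 hvv).2 he⟩, hb, hvv, hβ, ?_⟩
    rw [lab_subst H D u q.2.2.2 hD (hwfH.1 q.2 he).2.1]
    exact hlab

lemma filter_bridgeIn (H D : ExtGraph) (u v : ℕ) (hwfD : WFE D)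
    (hD : ∀ x ∈ D.V, x ∉ H.V) (hv : v ∈ H.V)
    (hadj : ∀ β : ELab, (v, β, u) ∉ H.E) :
    (bridgeIn H u D).filter (fun e => e.1 ≠ v ∧ e.2.2 ≠ v) = bridgeIn H u D := by
  apply Finset.filter_true_of_mem
  intro e he
  rcases Finset.mem_image.1 he with ⟨q, hq, rfl⟩
  obtain ⟨hmem, _, hvv, _, _⟩ := Finset.mem_filter.1 hq
  refine ⟨fun h1 => ?_, fun h2 => ?_⟩
  · have heH : (q.2.1, q.2.2.1, q.2.2.2) ∈ H.E := by
      simpa using (Finset.mem_product.1 hmem).2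
    rw [show q.2.1 = v from h1, hvv] at heH
    exact hadj _ heH
  · exact hD _ (hwfD.2 q.1 (Finset.mem_product.1 hmem).1)
      ((show q.1.2.2.2.1 = v from h2) ▸ hv)

lemma filter_bridgeOut (H D : ExtGraph) (u v : ℕ) (hwfD : WFE D)
    (hD : ∀ x ∈ D.V, x ∉ H.V) (hv : v ∈ H.V)
    (hadj : ∀ β : ELab, (u, β, v) ∉ H.E) :
    (bridgeOut H u D).filter (fun e => e.1 ≠ v ∧ e.2.2 ≠ v) = bridgeOut H u D := by
  apply Finset.filter_true_of_mem
  intro e he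
  rcases Finset.mem_image.1 he with ⟨q, hq, rfl⟩
  obtain ⟨hmem, _, hvv, _, _⟩ := Finset.mem_filter.1 hq
  refine ⟨fun h1 => ?_, fun h2 => ?_⟩
  · exact hD _ (hwfD.2 q.1 (Finset.mem_product.1 hmem).1)
      ((show q.1.2.2.2.1 = v from h1) ▸ hv)
  · have heH : (q.2.1, q.2.2.1, q.2.2.2) ∈ H.E := by
      simpa using (Finset.mem_product.1 hmem).2
    rw [hvv, show q.2.2.2 = v from h2] at heH
    exact hadj _ heH

lemma filter_DE (D : ExtGraph) (v : ℕ) (hwfD : WFE D) (hvD : v ∉ D.V) :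
    D.E.filter (fun e => e.1 ≠ v ∧ e.2.2 ≠ v) = D.E :=
  Finset.filter_true_of_mem (fun e he =>
    ⟨fun h => hvD (h ▸ (hwfD.1 e he).1), fun h => hvD (h ▸ (hwfD.1 e he).2.1)⟩)

lemma filter_compC (H D : ExtGraph) (u v : ℕ) (hwfD : WFE D) (hvD : v ∉ D.V) :
    (compC H u D).filter (fun c => c.2.2.2.1 ≠ v) = compC H u D := by
  apply Finset.filter_true_of_mem
  intro c hc
  rcases Finset.mem_image.1 hc with ⟨q, hq, rfl⟩
  exact fun h => hvD ((show q.2.2.2.2.1 = v from h) ▸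
    hwfD.2 q.2 (Finset.mem_product.1 (Finset.mem_filter.1 hq).1).2)

lemma compC_subst (H D E : ExtGraph) (u v : ℕ) (hwfD : WFE D)
    (hD : ∀ x ∈ D.V, x ∉ H.V) (hv : v ∈ H.V) (huv : u ≠ v) :
    compC (subst H u D) v E = compC H v E := by
  unfold compC
  congr 1
  ext q
  simp only [Finset.mem_filter, Finset.mem_product]
  constructor
  · rintro ⟨⟨hc, he⟩, htv, rest⟩
    refine ⟨⟨?_, he⟩, htv, rest⟩
    rw [subst_C'] at hc
    rcases Finset.mem_union.1 hc with h | h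
    · exact (Finset.mem_filter.1 h).1
    · exfalso
      rcases Finset.mem_image.1 h with ⟨p, hp, hpe⟩
      have hmem := hwfD.2 p.2 (Finset.mem_product.1 (Finset.mem_filter.1 hp).1).2
      rw [← hpe] at htv
      exact hD _ hmem ((show p.2.2.2.2.1 = v from htv) ▸ hv)
  · rintro ⟨⟨hc, he⟩, htv, rest⟩
    refine ⟨⟨?_, he⟩, htv, rest⟩
    rw [subst_C']
    refine Finset.mem_union.2 (Or.inl (Finset.mem_filter.2 ⟨hc, ?_⟩))
    rw [htv]; exact huv.symm
set_option maxHeartbeats 1000000 in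
/-- Substituting at distinct (non-adjacent) nonterminal vertices
commutes: (H[u/D])[v/E] ≅ (H[v/E])[u/D]. -/
theorem subst_commutes (H D E : ExtGraph) (u v : ℕ)
    (hwfH : WFE H) (hwfD : WFE D) (hwfE : WFE E)
    (hu : u ∈ H.V) (hv : v ∈ H.V) (huv : u ≠ v)
    (hntu : (H.lab u).isNT = true) (hntv : (H.lab v).isNT = true)
    (hadj : ∀ β : ELab, (u, β, v) ∉ H.E ∧ (v, β, u) ∉ H.E)
    (hD : ∀ x ∈ D.V, x ∉ H.V) (hE : ∀ x ∈ E.V, x ∉ H.V)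
    (hDE : ∀ x ∈ D.V, x ∉ E.V)
    (hDC : ∀ c ∈ D.C, c.1.isNT = false) (hEC : ∀ c ∈ E.C, c.1.isNT = false)
    (hHC : ∀ c ∈ H.C, c.1.isNT = false) :
    ExtIso (subst (subst H u D) v E) (subst (subst H v E) u D) := by
  have hvD : v ∉ D.V := fun h => hD v h hv
  have huE : u ∉ E.V := fun h => hE u h hu
  have huD : u ∉ D.V := fun h => hD u h hu
  have hvE : v ∉ E.V := fun h => hE v h hv
  have hadjuv : ∀ β : ELab, (u, β, v) ∉ H.E := fun β => (hadj β).1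
  have hadjvu : ∀ β : ELab, (v, β, u) ∉ H.E := fun β => (hadj β).2
  -- vertex sets
  have hV : (subst (subst H u D) v E).V = (subst (subst H v E) u D).V := by
    rw [subst_V', subst_V', subst_V', subst_V', Finset.erase_union_distrib,
      Finset.erase_union_distrib, Finset.erase_eq_of_notMem hvD,
      Finset.erase_eq_of_notMem huE]
    ext x
    simp only [Finset.mem_union, Finset.mem_erase]
    tauto
  -- edge sets
  have hEeq : (subst (subst H u D) v E).E = (subst (subst H v E) u D).E := by
    rw [subst_E' (subst H u D) E v, subst_E' (subst H v E) D u,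
      bridgeIn_subst H D E u v hwfH hwfD hD hv huv hadjuv,
      bridgeOut_subst H D E u v hwfH hwfD hD hv huv hadjvu,
      bridgeIn_subst H E D v u hwfH hwfE hE hu huv.symm hadjvu,
      bridgeOut_subst H E D v u hwfH hwfE hE hu huv.symm hadjuv,
      subst_E' H D u, subst_E' H E v,
      Finset.filter_union, Finset.filter_union, Finset.filter_union,
      Finset.filter_union, Finset.filter_union, Finset.filter_union,
      filter_bridgeIn H D u v hwfD hD hv hadjvu,
      filter_bridgeOut H D u v hwfD hD hv hadjuv,
      filter_bridgeIn H E v u hwfE hE hu hadjuv,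
      filter_bridgeOut H E v u hwfE hE hu hadjvu,
      filter_DE D v hwfD hvD, filter_DE E u hwfE huE,
      Finset.filter_comm]
    ac_rfl
  -- connection relations
  have hCeq : (subst (subst H u D) v E).C = (subst (subst H v E) u D).C := by
    rw [subst_C' (subst H u D) E v, subst_C' (subst H v E) D u,
      compC_subst H D E u v hwfD hD hv huv,
      compC_subst H E D v u hwfE hE hu huv.symm,
      subst_C' H D u, subst_C' H E v,
      Finset.filter_union, Finset.filter_union,
      filter_compC H D u v hwfD hvD, filter_compC H E v u hwfE huE,
      Finset.filter_comm]
    ac_rfl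
  refine ⟨id, ?_, ?_, ?_, ?_⟩
  · rw [hV]; exact Set.bijOn_id _
  · intro x hx
    show (subst (subst H v E) u D).lab x = (subst (subst H u D) v E).lab x
    show (if x ∈ D.V then D.lab x else if x ∈ E.V then E.lab x else H.lab x) =
      (if x ∈ E.V then E.lab x else if x ∈ D.V then D.lab x else H.lab x)
    by_cases hxD : x ∈ D.V
    · simp [hxD, hDE x hxD]
    · by_cases hxE : x ∈ E.V <;> simp [hxD, hxE]
  · intro a l w _ _
    rw [← hEeq]
    exact Iff.rfl
  · intro σ β γ x d _
    rw [← hCeq]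
    exact Iff.rfl
end
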